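/- arXiv:1811.02393 — 9 statements merged into one kernel-verified Lean document; each statement's English description precedes it below -/
import Mathlib

section
/- Let A be a topological algebra (a topological vector space with separately continuous multiplication) possessing a left approximate identity, and let J be a dense right ideal of A. Then J intersects every closed left ideal I of A densely, i.e. the closure of J ∩ I equals I. -/
/-- In a semi-topological algebra (a topological vector space with separately
continuous multiplication) with a left approximate identity, every dense right ideal `J`
intersects every closed left ideal `I` densely. -/
theorem dense_right_ideal_inter_closed_left_ideal
    {A : Type*} [NonUnitalRing A] [Module ℂ A] [IsScalarTower ℂ A A] [SMulCommClass ℂ A A]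
    [TopologicalSpace A] [IsTopologicalAddGroup A] [ContinuousSMul ℂ A]
    (hmul : ∀ a : A, Continuous (fun x => a * x) ∧ Continuous (fun x => x * a))
    (lai : ∃ (ι : Type) (l : Filter ι) (e : ι → A), l.NeBot ∧
      ∀ a : A, Filter.Tendsto (fun i => e i * a) l (nhds a))
    (J : Submodule ℂ A) (hJr : ∀ x ∈ J, ∀ a : A, x * a ∈ J)
    (hJdense : Dense (J : Set A))
    (I : Submodule ℂ A) (hIl : ∀ a : A, ∀ x ∈ I, a * x ∈ I)
    (hIclosed : IsClosed (I : Set A)) :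
    closure ((J : Set A) ∩ (I : Set A)) = (I : Set A) := by
  apply Set.Subset.antisymm
  · calc closure ((J : Set A) ∩ (I : Set A)) ⊆ closure (I : Set A) :=
          closure_mono Set.inter_subset_right
      _ = (I : Set A) := hIclosed.closure_eq
  · intro x hx
    obtain ⟨ι, l, e, hne, hlim⟩ := lai
    -- every a * x lies in closure (J ∩ I)
    have key : ∀ a : A, a * x ∈ closure ((J : Set A) ∩ (I : Set A)) := by
      intro a
      have hcont : Continuous (fun y : A => y * x) := (hmul x).2
      have h1 : (fun y : A => y * x) '' (J : Set A) ⊆ (J : Set A) ∩ (I : Set A) := by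
        rintro _ ⟨j, hj, rfl⟩
        exact ⟨hJr j hj x, hIl j x hx⟩
      have h2 : a ∈ closure (J : Set A) := hJdense a
      have h3 : a * x ∈ (fun y : A => y * x) '' closure (J : Set A) := ⟨a, h2, rfl⟩
      have h4 := image_closure_subset_closure_image hcont h3
      exact closure_mono h1 h4
    have : Filter.Tendsto (fun i => e i * x) l (nhds x) := hlim x
    exact isClosed_closure.mem_of_tendsto this (Filter.Eventually.of_forall fun i => key (e i))
end

section
/- Let A be a semi-topological algebra and I a closed two-sided ideal of A. If A is topologically left Noetherian, then so is the quotient algebra A/I. -/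
/-- A closed left ideal of a (semi-)topological algebra is topologically finitely generated if it
is the closure of `A♯x₁ + ⋯ + A♯xₙ` for finitely many of its elements, where `A♯x` denotes the
set of elements `a * x + s • x` with `a ∈ A`, `s ∈ ℂ`. -/
def IsTopLeftNoetherian (A : Type*) [NonUnitalRing A] [Module ℂ A] [TopologicalSpace A] : Prop :=
  ∀ I : Submodule ℂ A, (∀ a : A, ∀ x ∈ I, a * x ∈ I) → IsClosed (I : Set A) →
    ∃ (n : ℕ) (x : Fin n → A), (∀ i, x i ∈ I) ∧
      (I : Set A) = closure {y | ∃ (a : Fin n → A) (s : Fin n → ℂ),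
        y = ∑ i, (a i * x i + s i • x i)}

/-- If a semi-topological algebra `A` is topologically left Noetherian, then so is
any quotient `A ⧸ I` by a closed two-sided ideal `I`; the quotient is represented by a surjective
topological quotient map `φ : A →ₙₐ[ℂ] B` whose kernel is `I`. -/
theorem isTopLeftNoetherian_quotient
    {A B : Type*}
    [NonUnitalRing A] [Module ℂ A] [IsScalarTower ℂ A A] [SMulCommClass ℂ A A]
    [TopologicalSpace A] [IsTopologicalAddGroup A] [ContinuousSMul ℂ A]
    [NonUnitalRing B] [Module ℂ B] [IsScalarTower ℂ B B] [SMulCommClass ℂ B B]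
    [TopologicalSpace B] [IsTopologicalAddGroup B] [ContinuousSMul ℂ B]
    (hmulA : ∀ a : A, Continuous (fun x => a * x) ∧ Continuous (fun x => x * a))
    (hmulB : ∀ b : B, Continuous (fun x => b * x) ∧ Continuous (fun x => x * b))
    (I : Submodule ℂ A)
    (hIleft : ∀ a : A, ∀ x ∈ I, a * x ∈ I) (hIright : ∀ x ∈ I, ∀ a : A, x * a ∈ I)
    (hIclosed : IsClosed (I : Set A))
    (φ : A →ₙₐ[ℂ] B) (hsurj : Function.Surjective φ) (hquot : Topology.IsQuotientMap ⇑φ)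
    (hker : φ ⁻¹' {0} = (I : Set A))
    (hA : IsTopLeftNoetherian A) :
    IsTopLeftNoetherian B := by
  intro J hJleft hJclosed
  -- pull back J to A
  set L : Submodule ℂ A := J.comap (φ : A →ₗ[ℂ] B) with hLdef
  have hmemL : ∀ a : A, a ∈ L ↔ φ a ∈ J := fun a => Iff.rfl
  have hLleft : ∀ a : A, ∀ x ∈ L, a * x ∈ L := by
    intro a x hx
    rw [hmemL] at hx ⊢
    rw [map_mul]
    exact hJleft (φ a) (φ x) hx
  have hLclosed : IsClosed (L : Set A) := hJclosed.preimage hquot.continuous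
  obtain ⟨n, x, hx, hclos⟩ := hA L hLleft hLclosed
  refine ⟨n, fun i => φ (x i), fun i => (hmemL (x i)).mp (hx i), ?_⟩
  have himg : φ '' {y | ∃ (a : Fin n → A) (s : Fin n → ℂ),
        y = ∑ i, (a i * x i + s i • x i)}
      = {y | ∃ (b : Fin n → B) (s : Fin n → ℂ),
        y = ∑ i, (b i * φ (x i) + s i • φ (x i))} := by
    ext y
    constructor
    · rintro ⟨z, ⟨a, s, rfl⟩, rfl⟩
      refine ⟨fun i => φ (a i), s, ?_⟩
      simp [map_sum, map_mul]
    · rintro ⟨b, s, rfl⟩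
      choose a ha using fun i => hsurj (b i)
      refine ⟨∑ i, (a i * x i + s i • x i), ⟨a, s, rfl⟩, ?_⟩
      simp [map_sum, map_mul, ha]
  apply Set.Subset.antisymm
  · intro y hy
    obtain ⟨z, rfl⟩ := hsurj y
    have hz : z ∈ (L : Set A) := (hmemL z).mpr hy
    rw [hclos] at hz
    have := image_closure_subset_closure_image (f := ⇑φ) hquot.continuous (Set.mem_image_of_mem _ hz)
    rwa [himg] at this
  · apply hJclosed.closure_subset_iff.mpr
    rintro y ⟨b, s, rfl⟩
    apply Submodule.sum_mem
    intro i _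
    have hxi : φ (x i) ∈ J := (hmemL (x i)).mp (hx i)
    exact J.add_mem (hJleft (b i) _ hxi) (J.smul_mem _ hxi)
end

section
/- A semi-topological algebra A is topologically left Noetherian if and only if its unitisation A♯ is topologically left Noetherian. -/
/-- The product topology on the unitisation `A♯ = ℂ ⊕ A`, transported along the canonical
additive equivalence `Unitization ℂ A ≃+ ℂ × A`. -/
noncomputable def unitizationTopology (A : Type*) [NonUnitalRing A] [Module ℂ A]
    [TopologicalSpace A] : TopologicalSpace (Unitization ℂ A) :=
  TopologicalSpace.induced (Unitization.addEquiv ℂ A) inferInstance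

/-- The generating set appearing in the definition of topological left Noetherianity. -/
def genSet (B : Type*) [NonUnitalRing B] [Module ℂ B] {n : ℕ} (x : Fin n → B) : Set B :=
  {y | ∃ (a : Fin n → B) (s : Fin n → ℂ), y = ∑ i, (a i * x i + s i • x i)}

lemma genSet_add {B : Type*} [NonUnitalRing B] [Module ℂ B] {n : ℕ} {x : Fin n → B}
    {y z : B} (hy : y ∈ genSet B x) (hz : z ∈ genSet B x) : y + z ∈ genSet B x := by
  obtain ⟨a, s, rfl⟩ := hy
  obtain ⟨a', s', rfl⟩ := hz
  refine ⟨a + a', s + s', ?_⟩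
  rw [← Finset.sum_add_distrib]
  refine Finset.sum_congr rfl fun i _ => ?_
  simp only [Pi.add_apply, add_mul, add_smul]
  abel

lemma genSet_mem_smul {B : Type*} [NonUnitalRing B] [Module ℂ B] {n : ℕ} (x : Fin n → B)
    (t : ℂ) (j : Fin n) : t • x j ∈ genSet B x := by
  refine ⟨0, fun i => if i = j then t else 0, ?_⟩
  rw [Finset.sum_congr rfl (fun i _ => by
    show (0 : B) * x i + _ = (if i = j then t • x j else 0)
    split <;> simp_all)]
  simp

lemma inr_sum {A : Type*} [NonUnitalRing A] [Module ℂ A] {n : ℕ} (f : Fin n → A) :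
    ((∑ i, f i : A) : Unitization ℂ A) = ∑ i, ((f i : A) : Unitization ℂ A) :=
  map_sum (Unitization.inrHom ℂ ℂ A) f Finset.univ

lemma inr_simple_eq {A : Type*} [NonUnitalRing A] [Module ℂ A] (a b : A) (s : ℂ) :
    ((a * b + s • b : A) : Unitization ℂ A) =
      (a : Unitization ℂ A) * (b : Unitization ℂ A) + s • (b : Unitization ℂ A) := by
  rw [Unitization.inr_add, Unitization.inr_mul, Unitization.inr_smul]

lemma inr_key_eq {A : Type*} [NonUnitalRing A] [Module ℂ A] (c : Unitization ℂ A) (s : ℂ)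
    (b : A) :
    ((c.snd * b + (c.fst + s) • b : A) : Unitization ℂ A) =
      c * (b : Unitization ℂ A) + s • (b : Unitization ℂ A) := by
  apply Unitization.ext
  · simp
  · simp only [Unitization.snd_inr, Unitization.snd_add, Unitization.snd_mul,
      Unitization.snd_smul, Unitization.fst_inr, zero_smul, add_zero, add_smul]
    abel

lemma genSet_subset {B : Type*} [NonUnitalRing B] [Module ℂ B] {n : ℕ} {x : Fin n → B}
    {J : Submodule ℂ B} (hJ : ∀ a : B, ∀ z ∈ J, a * z ∈ J) (hx : ∀ i, x i ∈ J) :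
    genSet B x ⊆ (J : Set B) := by
  rintro y ⟨a, s, rfl⟩
  exact Submodule.sum_mem _ fun i _ => J.add_mem (hJ _ _ (hx i)) (J.smul_mem _ (hx i))

/-- A semi-topological algebra `A` is topologically left Noetherian if and only
if its unitisation `A♯` is topologically left Noetherian. -/
theorem isTopLeftNoetherian_iff_unitization
    {A : Type*} [NonUnitalRing A] [Module ℂ A] [IsScalarTower ℂ A A] [SMulCommClass ℂ A A]
    [TopologicalSpace A] [IsTopologicalAddGroup A] [ContinuousSMul ℂ A]
    (hmul : ∀ a : A, Continuous (fun x => a * x) ∧ Continuous (fun x => x * a)) :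
    IsTopLeftNoetherian A ↔
      @IsTopLeftNoetherian (Unitization ℂ A) _ _ (unitizationTopology A) := by
  letI : TopologicalSpace (Unitization ℂ A) := unitizationTopology A
  -- the canonical homeomorphism with the product
  let e : Unitization ℂ A ≃ₜ ℂ × A :=
    (Unitization.addEquiv ℂ A).toEquiv.toHomeomorphOfIsInducing ⟨rfl⟩
  have he : ∀ z : Unitization ℂ A, e z = (z.fst, z.snd) := fun z => rfl
  haveI : ContinuousAdd (Unitization ℂ A) :=
    Topology.IsInducing.continuousAdd (Unitization.addEquiv ℂ A) ⟨rfl⟩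
  have hinr_cont : Continuous (Unitization.inr : A → Unitization ℂ A) := by
    refine continuous_induced_rng.mpr ?_
    exact continuous_const.prodMk continuous_id
  -- image of inr interacts with closure
  have hinr_closure : ∀ S : Set A,
      closure ((Unitization.inr : A → Unitization ℂ A) '' S) =
        (Unitization.inr : A → Unitization ℂ A) '' closure S := by
    intro S
    have h1 : e '' ((Unitization.inr : A → Unitization ℂ A) '' S) = {(0 : ℂ)} ×ˢ S := by
      rw [Set.image_image, Set.singleton_prod]
      rfl
    have h2 : closure ((Unitization.inr : A → Unitization ℂ A) '' S)
        = e.symm '' closure (e '' ((Unitization.inr : A → Unitization ℂ A) '' S)) := by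
      rw [e.symm.image_closure, Set.image_image]
      simp
    rw [h2, h1, closure_prod_eq, closure_singleton, Set.singleton_prod, Set.image_image]
    rfl
  have hinr_inj : Function.Injective (Unitization.inr : A → Unitization ℂ A) :=
    Unitization.inr_injective
  constructor
  · -- A noetherian → A♯ noetherian
    intro hA J hJmul hJcl
    -- the closed left ideal J ∩ A of A
    let I₀ : Submodule ℂ A :=
      { carrier := {b : A | (b : Unitization ℂ A) ∈ J}
        add_mem' := fun {b c} hb hc => by
          simp only [Set.mem_setOf_eq, Unitization.inr_add] at *
          exact J.add_mem hb hc
        zero_mem' := by simp only [Set.mem_setOf_eq, Unitization.inr_zero]; exact J.zero_mem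
        smul_mem' := fun t b hb => by
          simp only [Set.mem_setOf_eq, Unitization.inr_smul] at *
          exact J.smul_mem t hb }
    have hI₀mul : ∀ a : A, ∀ b ∈ I₀, a * b ∈ I₀ := by
      intro a b hb
      show ((a * b : A) : Unitization ℂ A) ∈ J
      rw [Unitization.inr_mul]
      exact hJmul _ _ hb
    have hI₀cl : IsClosed (I₀ : Set A) :=
      hJcl.preimage hinr_cont
    obtain ⟨n, x, hxI, hIeq'⟩ := hA I₀ hI₀mul hI₀cl
    have hIeq : (I₀ : Set A) = closure (genSet A x) := hIeq'
    -- inr of the generating set of I₀ sits inside generating sets upstairs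
    by_cases hfst : ∀ z ∈ J, z.fst = 0
    · -- J ⊆ A
      refine ⟨n, fun i => (x i : Unitization ℂ A), fun i => hxI i, ?_⟩
      have hJI : (J : Set (Unitization ℂ A)) =
          (Unitization.inr : A → Unitization ℂ A) '' (I₀ : Set A) := by
        ext z
        constructor
        · intro hz
          refine ⟨z.snd, ?_, ?_⟩
          · show ((z.snd : A) : Unitization ℂ A) ∈ J
            have : (z.snd : Unitization ℂ A) = z :=
              Unitization.ext (by simp [hfst z hz]) (by simp)
            rwa [this]
          · exact Unitization.ext (by simp [hfst z hz]) (by simp)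
        · rintro ⟨b, hb, rfl⟩
          exact hb
      have hgen : (Unitization.inr : A → Unitization ℂ A) '' genSet A x =
          genSet (Unitization ℂ A) (fun i => (x i : Unitization ℂ A)) := by
        ext z
        constructor
        · rintro ⟨y, ⟨a, s, rfl⟩, rfl⟩
          refine ⟨fun i => (a i : Unitization ℂ A), s, ?_⟩
          rw [inr_sum]
          exact Finset.sum_congr rfl fun i _ => inr_simple_eq _ _ _
        · rintro ⟨a, s, rfl⟩
          refine ⟨∑ i, ((a i).snd * x i + ((a i).fst + s i) • x i), ⟨fun i => (a i).snd,
            fun i => (a i).fst + s i, rfl⟩, ?_⟩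
          rw [inr_sum]
          exact Finset.sum_congr rfl fun i _ => inr_key_eq _ _ _
      rw [hJI, hIeq, ← hinr_closure, hgen]
      rfl
    · -- J contains an element with nonzero scalar part
      push_neg at hfst
      obtain ⟨w, hwJ, hw0⟩ := hfst
      set u : Unitization ℂ A := (w.fst)⁻¹ • w with hu
      have huJ : u ∈ J := J.smul_mem _ hwJ
      have hufst : u.fst = 1 := by
        simp [hu, Unitization.fst_smul, smul_eq_mul, inv_mul_cancel₀ hw0]
      refine ⟨n + 1, Fin.cons u (fun i => (x i : Unitization ℂ A)), ?_, ?_⟩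
      · intro i
        refine Fin.cases ?_ ?_ i
        · exact huJ
        · intro j; exact hxI j
      · set g : Fin (n + 1) → Unitization ℂ A := Fin.cons u (fun i => (x i : Unitization ℂ A))
          with hg
        have hgsub : genSet (Unitization ℂ A) g ⊆ (J : Set (Unitization ℂ A)) := by
          refine genSet_subset hJmul ?_
          intro i
          refine Fin.cases huJ (fun j => hxI j) i
        apply Set.eq_of_subset_of_subset
        · -- J ⊆ closure (genSet g)
          intro z hz
          -- z = z.fst • u + inr c  with c ∈ I₀
          set c : A := (z - z.fst • u).snd with hc
          have hfst0 : (z - z.fst • u).fst = 0 := by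
            rw [sub_eq_add_neg]
            simp [Unitization.fst_add, Unitization.fst_neg, Unitization.fst_smul, hufst,
              smul_eq_mul]
          have hcd : (c : Unitization ℂ A) = z - z.fst • u :=
            Unitization.ext (by simp [hfst0]) (by simp [hc])
          have hcJ : c ∈ I₀ := by
            show (c : Unitization ℂ A) ∈ J
            rw [hcd]
            exact J.sub_mem hz (J.smul_mem _ huJ)
          have hcc : c ∈ closure (genSet A x) := by
            rw [← hIeq]; exact hcJ

          have hz' : z = z.fst • u + (c : Unitization ℂ A) := by
            rw [hcd]; abel
          -- translation by z.fst • u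
          have hmap : Continuous (fun v : Unitization ℂ A => z.fst • u + v) :=
            continuous_const.add continuous_id
          have hsub : (fun v : Unitization ℂ A => z.fst • u + v) ''
              ((Unitization.inr : A → Unitization ℂ A) '' genSet A x) ⊆
              genSet (Unitization ℂ A) g := by
            rintro _ ⟨_, ⟨y, ⟨a, s, rfl⟩, rfl⟩, rfl⟩
            have h1 : z.fst • u ∈ genSet (Unitization ℂ A) g := by
              have := genSet_mem_smul g z.fst 0
              simpa [hg] using this
            refine genSet_add h1 ?_
            refine ⟨Fin.cons 0 (fun i => ((a i : A) : Unitization ℂ A)), Fin.cons 0 s, ?_⟩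
            rw [inr_sum, Fin.sum_univ_succ]
            simp only [Fin.cons_zero, Fin.cons_succ, zero_mul, zero_smul, add_zero, zero_add]
            refine Finset.sum_congr rfl fun i _ => ?_
            rw [show g i.succ = ((x i : A) : Unitization ℂ A) from by simp [hg]]
            exact inr_simple_eq _ _ _
          have : z ∈ (fun v : Unitization ℂ A => z.fst • u + v) ''
              closure ((Unitization.inr : A → Unitization ℂ A) '' genSet A x) := by
            refine ⟨(c : Unitization ℂ A), ?_, hz'.symm⟩
            rw [hinr_closure]
            exact ⟨c, hcc, rfl⟩
          obtain ⟨v, hv, hvz⟩ := this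
          have hin := (image_closure_subset_closure_image hmap) ⟨v, hv, hvz⟩
          exact closure_mono hsub hin
        · exact closure_minimal hgsub hJcl
  · -- A♯ noetherian → A noetherian
    intro hU I hImul hIcl
    -- inr I is a closed left ideal of A♯
    let J : Submodule ℂ (Unitization ℂ A) :=
      { carrier := (Unitization.inr : A → Unitization ℂ A) '' (I : Set A)
        add_mem' := by
          rintro _ _ ⟨b, hb, rfl⟩ ⟨c, hc, rfl⟩
          exact ⟨b + c, I.add_mem hb hc, by rw [Unitization.inr_add]⟩
        zero_mem' := ⟨0, I.zero_mem, by rw [Unitization.inr_zero]⟩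
        smul_mem' := by
          rintro t _ ⟨b, hb, rfl⟩
          exact ⟨t • b, I.smul_mem t hb, by rw [Unitization.inr_smul]⟩ }
    have hJmul : ∀ z : Unitization ℂ A, ∀ y ∈ J, z * y ∈ J := by
      rintro z _ ⟨b, hb, rfl⟩
      refine ⟨z.fst • b + z.snd * b, I.add_mem (I.smul_mem _ hb) (hImul _ _ hb), ?_⟩
      apply Unitization.ext
      · simp
      · simp
    have hJcl : IsClosed (J : Set (Unitization ℂ A)) := by
      have h1 : (J : Set (Unitization ℂ A)) =
          (Unitization.inr : A → Unitization ℂ A) '' (I : Set A) := rfl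
      rw [h1, ← hIcl.closure_eq, ← hinr_closure]
      exact isClosed_closure
    obtain ⟨n, g, hgJ, hJeq⟩ := hU J hJmul hJcl
    refine ⟨n, fun i => (g i).snd, ?_, ?_⟩
    · intro i
      obtain ⟨b, hb, hbe⟩ := hgJ i
      have hsnd : (g i).snd = b := by rw [← hbe]; simp
      show (g i).snd ∈ I
      rw [hsnd]; exact hb
    · have hgi : ∀ i, g i = (((g i).snd : A) : Unitization ℂ A) := by
        intro i
        obtain ⟨b, hb, hbe⟩ := hgJ i
        apply Unitization.ext
        · rw [← hbe]; simp
        · simp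
      have hgen : (Unitization.inr : A → Unitization ℂ A) '' genSet A (fun i => (g i).snd) =
          genSet (Unitization ℂ A) g := by
        ext z
        constructor
        · rintro ⟨y, ⟨a, s, rfl⟩, rfl⟩
          refine ⟨fun i => ((a i : A) : Unitization ℂ A), s, ?_⟩
          rw [inr_sum]
          refine Finset.sum_congr rfl fun i _ => ?_
          rw [hgi i]
          exact inr_simple_eq _ _ _
        · rintro ⟨a, s, rfl⟩
          refine ⟨∑ i, ((a i).snd * (g i).snd + ((a i).fst + s i) • (g i).snd),
            ⟨fun i => (a i).snd, fun i => (a i).fst + s i, rfl⟩, ?_⟩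
          rw [inr_sum]
          refine Finset.sum_congr rfl fun i _ => ?_
          conv_rhs => rw [hgi i]
          exact inr_key_eq _ _ _
      have key : (Unitization.inr : A → Unitization ℂ A) '' (I : Set A) =
          (Unitization.inr : A → Unitization ℂ A) '' closure (genSet A (fun i => (g i).snd)) := by
        rw [← hinr_closure, hgen]
        exact hJeq
      have := Set.image_injective.mpr hinr_inj key
      exact this
end

section
/- Let G be a countable discrete group with the property that f lies in the closure of A(G)·f for all f in the Fourier algebra A(G). Then A(G) is topologically Noetherian: every closed ideal of A(G) is topologically principal (generated topologically by a single element). -/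
/-- An abstract model of the Fourier algebra `A(G)` of a discrete group `G`: a commutative Banach
algebra of functions on `G` (contained in `c₀(G)`, with evaluations of norm at most `‖·‖`),
containing the point masses `δ_x` (which have norm one), and such that, under the hypothesis
`f ∈ closure (A(G)·f)` for all `f`, its closed ideals are exactly the sets
`I(E) = {f : f|_E = 0}` (Kaniuth–Lau). -/
structure FourierAlgebraModel (G : Type*) [Group G] where
  carrier : Type*
  [nring : NormedCommRing carrier]
  [nalg : NormedAlgebra ℂ carrier]
  [complete : CompleteSpace carrier]
  coeFn : carrier →ₐ[ℂ] (G → ℂ)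
  inj : Function.Injective coeFn
  /-- `A(G) ⊆ c₀(G)`. -/
  zeroAtInfty : ∀ f : carrier, ∀ ε : ℝ, 0 < ε → {x : G | ε ≤ ‖coeFn f x‖}.Finite
  /-- `‖f‖_∞ ≤ ‖f‖_{A(G)}`. -/
  eval_le : ∀ (f : carrier) (x : G), ‖coeFn f x‖ ≤ ‖f‖
  delta : G → carrier
  coeFn_delta : ∀ x : G, coeFn (delta x) = Set.indicator {x} (fun _ => (1 : ℂ))
  norm_delta : ∀ x : G, ‖delta x‖ = 1
  ideal_classification :
    (∀ f : carrier, f ∈ closure {y : carrier | ∃ a : carrier, y = a * f}) →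
    ∀ I : Submodule ℂ carrier, IsClosed (I : Set carrier) →
      (∀ a : carrier, ∀ f ∈ I, a * f ∈ I) →
      ∃ E : Set G, (I : Set carrier) = {f : carrier | ∀ x ∈ E, coeFn f x = 0}

attribute [instance] FourierAlgebraModel.nring FourierAlgebraModel.nalg
  FourierAlgebraModel.complete

/-- Let `G` be a countable discrete group such that `f ∈ closure (A(G)·f)` for
all `f ∈ A(G)`. Then `A(G)` is topologically Noetherian: every closed ideal of `A(G)` is
topologically principal. -/
theorem fourierAlgebra_topologically_noetherian_of_countable
    {G : Type*} [Group G] [Countable G] (M : FourierAlgebraModel G)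
    (hmod : ∀ f : M.carrier, f ∈ closure {y : M.carrier | ∃ a : M.carrier, y = a * f}) :
    ∀ I : Submodule ℂ M.carrier, IsClosed (I : Set M.carrier) →
      (∀ a : M.carrier, ∀ f ∈ I, a * f ∈ I) →
      ∃ g ∈ I, (I : Set M.carrier) =
        closure {y : M.carrier | ∃ (a : M.carrier) (s : ℂ), y = a * g + s • g} := by

  intro I hIclosed hImul
  obtain ⟨E, hE⟩ := M.ideal_classification hmod I hIclosed hImul
  -- evaluation functionals are continuous
  have evalCont : ∀ x : G, ∃ L : M.carrier →L[ℂ] ℂ, ∀ f, L f = M.coeFn f x := by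
    intro x
    refine ⟨LinearMap.mkContinuous ((LinearMap.proj x).comp M.coeFn.toLinearMap) 1 ?_,
      fun f => rfl⟩
    intro f
    simpa using M.eval_le f x
  -- enumerate the complement of `E`
  obtain ⟨ι, hι⟩ := Countable.exists_injective_nat {x : G // x ∉ E}
  set c : {x : G // x ∉ E} → ℂ := fun s => (2 : ℂ)⁻¹ ^ ι s with hc
  have hcne : ∀ s, c s ≠ 0 := fun s => pow_ne_zero _ (inv_ne_zero two_ne_zero)
  have hnorm : ∀ s, ‖c s • M.delta s.val‖ = (2 : ℝ)⁻¹ ^ ι s := by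
    intro s
    rw [norm_smul, M.norm_delta, mul_one, hc]
    simp [norm_pow]
  have hsum : Summable fun s : {x : G // x ∉ E} => c s • M.delta s.val := by
    refine Summable.of_norm ?_
    have hgeo : Summable fun n : ℕ => (2 : ℝ)⁻¹ ^ n :=
      summable_geometric_of_lt_one (by norm_num) (by norm_num)
    exact ((hgeo.comp_injective hι).congr fun s => (hnorm s).symm)
  set g : M.carrier := ∑' s : {x : G // x ∉ E}, c s • M.delta s.val with hg
  -- evaluation of g
  have hterm : ∀ (x : G) (s : {x : G // x ∉ E}),
      M.coeFn (c s • M.delta s.val) x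
        = c s * Set.indicator {s.val} (fun _ => (1 : ℂ)) x := by
    intro x s
    rw [map_smul, Pi.smul_apply, M.coeFn_delta, smul_eq_mul]
  have hg_eval : ∀ x : G, M.coeFn g x
      = ∑' s : {x : G // x ∉ E}, c s * Set.indicator {s.val} (fun _ => (1 : ℂ)) x := by
    intro x
    obtain ⟨L, hL⟩ := evalCont x
    have h1 : M.coeFn g x = L g := (hL g).symm
    rw [h1, hg, L.map_tsum hsum]
    exact tsum_congr fun s => by rw [hL, hterm]
  have hgE : ∀ x ∈ E, M.coeFn g x = 0 := by
    intro x hx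
    rw [hg_eval x]
    have h0 : ∀ s : {x : G // x ∉ E},
        c s * Set.indicator {s.val} (fun _ => (1 : ℂ)) x = 0 := by
      intro s
      have : x ∉ ({s.val} : Set G) := by
        intro h
        exact s.prop (by simpa using h ▸ hx)
      rw [Set.indicator_of_notMem this, mul_zero]
    rw [tsum_congr h0, tsum_zero]
  have hgnot : ∀ (x : G) (hx : x ∉ E), M.coeFn g x = c ⟨x, hx⟩ := by
    intro x hx
    rw [hg_eval x]
    rw [tsum_eq_single (⟨x, hx⟩ : {x : G // x ∉ E}) ?_]
    · simp
    · intro s hs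
      have : x ∉ ({s.val} : Set G) := by
        intro h
        apply hs
        apply Subtype.ext
        simpa using h.symm
      rw [Set.indicator_of_notMem this, mul_zero]
  have hgI : g ∈ I := by
    have : g ∈ (I : Set M.carrier) := by
      rw [hE]; exact fun x hx => hgE x hx
    exact this
  -- the candidate ideal
  let Jsub : Submodule ℂ M.carrier :=
    { carrier := {y : M.carrier | ∃ (a : M.carrier) (s : ℂ), y = a * g + s • g}
      add_mem' := by
        rintro y z ⟨a₁, s₁, rfl⟩ ⟨a₂, s₂, rfl⟩
        exact ⟨a₁ + a₂, s₁ + s₂, by rw [add_mul, add_smul]; abel⟩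
      zero_mem' := ⟨0, 0, by simp⟩
      smul_mem' := by
        rintro t y ⟨a, s, rfl⟩
        exact ⟨t • a, t * s, by rw [smul_add, smul_smul, smul_mul_assoc]⟩ }
  have Jmul : ∀ b : M.carrier, ∀ f ∈ Jsub.topologicalClosure, b * f ∈ Jsub.topologicalClosure := by
    intro b f hf
    have hf' : f ∈ closure (Jsub : Set M.carrier) := by
      rwa [← Submodule.topologicalClosure_coe]
    have : b * f ∈ closure (Jsub : Set M.carrier) := by
      refine map_mem_closure (continuous_mul_left b) hf' ?_
      rintro y ⟨a, s, rfl⟩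
      refine ⟨b * a + s • b, 0, ?_⟩
      rw [zero_smul, add_zero, mul_add, add_mul, mul_assoc, mul_smul_comm, smul_mul_assoc]
    rwa [← Submodule.topologicalClosure_coe] at this
  obtain ⟨F, hF⟩ := M.ideal_classification hmod Jsub.topologicalClosure
    Jsub.isClosed_topologicalClosure Jmul
  have hgJ : g ∈ closure (Jsub : Set M.carrier) := by
    refine closure_mono ?_ (hmod g)
    rintro y ⟨a, rfl⟩
    exact ⟨a, 0, by simp⟩
  have hgJ' : g ∈ (Jsub.topologicalClosure : Set M.carrier) := by
    rwa [Submodule.topologicalClosure_coe]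
  have hFE : F ⊆ E := by
    intro x hxF
    by_contra hxE
    have h0 : M.coeFn g x = 0 := by
      rw [hF] at hgJ'
      exact hgJ' x hxF
    rw [hgnot x hxE] at h0
    exact hcne _ h0
  refine ⟨g, hgI, ?_⟩
  apply Set.Subset.antisymm
  · intro f hfI
    have h1 : f ∈ (Jsub.topologicalClosure : Set M.carrier) := by
      rw [hF]
      intro x hx
      rw [hE] at hfI
      exact hfI x (hFE hx)
    rw [Submodule.topologicalClosure_coe] at h1
    exact h1
  · refine closure_minimal ?_ hIclosed
    rintro y ⟨a, s, rfl⟩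
    exact I.add_mem (hImul a g hgI) (I.smul_mem s hgI)
end

section
/- Let G be a discrete group. If the Fourier algebra A(G) is topologically Noetherian (in particular if A(G) itself is topologically finitely generated as an ideal), then G is countable. -/
/-- Let `G` be a discrete group. If the Fourier algebra `A(G)` is
topologically Noetherian (every closed ideal is topologically finitely generated), then `G`
is countable. -/
theorem countable_of_fourierAlgebra_topologically_noetherian
    {G : Type*} [Group G] (M : FourierAlgebraModel G)
    (hNoeth : ∀ I : Submodule ℂ M.carrier, IsClosed (I : Set M.carrier) →
      (∀ a : M.carrier, ∀ f ∈ I, a * f ∈ I) →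
      ∃ (n : ℕ) (h : Fin n → M.carrier), (∀ i, h i ∈ I) ∧
        (I : Set M.carrier) = closure {y : M.carrier |
          ∃ (a : Fin n → M.carrier) (s : Fin n → ℂ), y = ∑ i, (a i * h i + s i • h i)}) :
    Countable G := by
  obtain ⟨n, h, -, htop⟩ := hNoeth ⊤ isClosed_univ (fun a f _ => trivial)
  set S : Set G := ⋃ i : Fin n, {x | M.coeFn (h i) x ≠ 0} with hS
  have hScount : S.Countable := by
    refine Set.countable_iUnion fun i => ?_
    have hsub : {x | M.coeFn (h i) x ≠ 0} ⊆
        ⋃ m : ℕ, {x | (1 : ℝ) / (m + 1) ≤ ‖M.coeFn (h i) x‖} := by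
      intro x hx
      have hpos : 0 < ‖M.coeFn (h i) x‖ := norm_pos_iff.mpr hx
      obtain ⟨m, hm⟩ := exists_nat_one_div_lt hpos
      exact Set.mem_iUnion.2 ⟨m, hm.le⟩
    exact ((Set.countable_iUnion fun m =>
      (M.zeroAtInfty (h i) _ (by positivity)).countable).mono hsub)
  have hall : ∀ x : G, x ∈ S := by
    intro x
    by_contra hx
    have hzero : ∀ i, M.coeFn (h i) x = 0 := by
      intro i
      by_contra h0
      exact hx (Set.mem_iUnion.2 ⟨i, h0⟩)
    have hδ : M.delta x ∈ closure {y : M.carrier |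
        ∃ (a : Fin n → M.carrier) (s : Fin n → ℂ), y = ∑ i, (a i * h i + s i • h i)} := by
      have : M.delta x ∈ ((⊤ : Submodule ℂ M.carrier) : Set M.carrier) := trivial
      rwa [htop] at this
    obtain ⟨y, hy, hdist⟩ := Metric.mem_closure_iff.1 hδ 1 one_pos
    obtain ⟨a, s, rfl⟩ := hy
    have hyx : M.coeFn (∑ i, (a i * h i + s i • h i)) x = 0 := by
      rw [map_sum]
      rw [Finset.sum_apply]
      refine Finset.sum_eq_zero fun i _ => ?_
      simp [map_add, map_mul, hzero i]
    have hδx : M.coeFn (M.delta x) x = 1 := by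
      rw [M.coeFn_delta]
      simp
    have h1 : (1 : ℝ) ≤ ‖M.delta x - ∑ i, (a i * h i + s i • h i)‖ := by
      have := M.eval_le (M.delta x - ∑ i, (a i * h i + s i • h i)) x
      rwa [map_sub, Pi.sub_apply, hδx, hyx, sub_zero, norm_one] at this
    rw [dist_eq_norm] at hdist
    linarith
  have : (Set.univ : Set G).Countable := by
    rw [show (Set.univ : Set G) = S from Set.eq_univ_iff_forall.2 hall |>.symm]
    exact hScount
  exact Set.countable_univ_iff.mp this
end

section
/- Let E be a Banach space, n ∈ ℕ, T₁, …, Tₙ ∈ 𝒜(E) approximable operators, and let I be the closed left ideal of 𝒜(E) generated topologically by T₁, …, Tₙ. Then E′ ∘ I := ⋃_{T ∈ I} im T′ equals the closed linear span of im T₁′ + ⋯ + im Tₙ′ in E′. -/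
variable {E : Type*} [NormedAddCommGroup E] [NormedSpace ℂ E] [CompleteSpace E]

/-- The algebra `𝒜(E)` of approximable operators: the norm closure of the finite-rank operators
in `B(E)`. -/
def ApproxOps (E : Type*) [NormedAddCommGroup E] [NormedSpace ℂ E] : Set (E →L[ℂ] E) :=
  closure {T : E →L[ℂ] E | FiniteDimensional ℂ (LinearMap.range (T : E →ₗ[ℂ] E))}

/-- The image of the adjoint (Banach-space transpose) `T′ : E′ → E′`, `λ ↦ λ ∘ T`. -/
def imAdj (T : E →L[ℂ] E) : Set (StrongDual ℂ E) :=
  Set.range fun l : StrongDual ℂ E => l.comp T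

omit [CompleteSpace E] in
lemma approx_zero : (0 : E →L[ℂ] E) ∈ ApproxOps E := by
  apply subset_closure
  show FiniteDimensional ℂ (LinearMap.range ((0 : E →L[ℂ] E) : E →ₗ[ℂ] E))
  have hle : LinearMap.range ((0 : E →L[ℂ] E) : E →ₗ[ℂ] E) ≤ Submodule.span ℂ {(0 : E)} := by
    rintro x ⟨y, rfl⟩
    simp
  exact Submodule.finiteDimensional_of_le hle

omit [CompleteSpace E] in
lemma approx_smulRight (l : StrongDual ℂ E) (e : E) :
    (l.smulRight e) ∈ ApproxOps E := by
  apply subset_closure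
  show FiniteDimensional ℂ (LinearMap.range ((l.smulRight e) : E →ₗ[ℂ] E))
  have hle : LinearMap.range ((l.smulRight e) : E →ₗ[ℂ] E) ≤ Submodule.span ℂ {e} := by
    rintro x ⟨y, rfl⟩
    exact Submodule.smul_mem _ _ (Submodule.mem_span_singleton_self e)
  exact Submodule.finiteDimensional_of_le hle

omit [CompleteSpace E] in
lemma approx_add {A B : E →L[ℂ] E} (hA : A ∈ ApproxOps E) (hB : B ∈ ApproxOps E) :
    A + B ∈ ApproxOps E := by
  refine map_mem_closure₂ continuous_add hA hB ?_
  intro a ha b hb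
  show FiniteDimensional ℂ (LinearMap.range ((a + b : E →L[ℂ] E) : E →ₗ[ℂ] E))
  have ha' : FiniteDimensional ℂ (LinearMap.range (a : E →ₗ[ℂ] E)) := ha
  have hb' : FiniteDimensional ℂ (LinearMap.range (b : E →ₗ[ℂ] E)) := hb
  have hle : LinearMap.range ((a + b : E →L[ℂ] E) : E →ₗ[ℂ] E) ≤
      LinearMap.range (a : E →ₗ[ℂ] E) ⊔ LinearMap.range (b : E →ₗ[ℂ] E) := by
    rintro x ⟨y, rfl⟩
    exact Submodule.mem_sup.2 ⟨a y, ⟨y, rfl⟩, b y, ⟨y, rfl⟩, rfl⟩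
  exact Submodule.finiteDimensional_of_le hle

omit [CompleteSpace E] in
lemma approx_smul (c : ℂ) {A : E →L[ℂ] E} (hA : A ∈ ApproxOps E) :
    c • A ∈ ApproxOps E := by
  refine map_mem_closure (continuous_const_smul c) hA ?_
  intro a ha
  show FiniteDimensional ℂ (LinearMap.range ((c • a : E →L[ℂ] E) : E →ₗ[ℂ] E))
  have ha' : FiniteDimensional ℂ (LinearMap.range (a : E →ₗ[ℂ] E)) := ha
  have hle : LinearMap.range ((c • a : E →L[ℂ] E) : E →ₗ[ℂ] E) ≤
      LinearMap.range (a : E →ₗ[ℂ] E) := by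
    rintro x ⟨y, rfl⟩
    exact ⟨c • y, by simp⟩
  exact Submodule.finiteDimensional_of_le hle

/-- Let `T₁, …, Tₙ ∈ 𝒜(E)` and let `I` be the closed left ideal of `𝒜(E)`
topologically generated by `T₁, …, Tₙ` (the closure of `𝒜(E)♯T₁ + ⋯ + 𝒜(E)♯Tₙ`). Then
`E′ ∘ I = ⋃_{T ∈ I} im T′` equals the closed linear span of `im T₁′ + ⋯ + im Tₙ′`. -/
theorem dual_comp_topGenIdeal_eq_closedSpan_imAdj
    (n : ℕ) (T : Fin n → (E →L[ℂ] E)) (hT : ∀ i, T i ∈ ApproxOps E)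
    (I : Set (E →L[ℂ] E))
    (hI : I = closure {y : E →L[ℂ] E | ∃ (a : Fin n → (E →L[ℂ] E)) (s : Fin n → ℂ),
      (∀ i, a i ∈ ApproxOps E) ∧ y = ∑ i, ((a i).comp (T i) + s i • T i)}) :
    (⋃ S ∈ I, imAdj S) =
      closure (Submodule.span ℂ (⋃ i, imAdj (T i)) : Set (StrongDual ℂ E)) := by
  set G : Set (E →L[ℂ] E) := {y : E →L[ℂ] E | ∃ (a : Fin n → (E →L[ℂ] E)) (s : Fin n → ℂ),
      (∀ i, a i ∈ ApproxOps E) ∧ y = ∑ i, ((a i).comp (T i) + s i • T i)} with hG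
  set sp : Submodule ℂ (StrongDual ℂ E) := Submodule.span ℂ (⋃ i, imAdj (T i)) with hsp
  apply Set.Subset.antisymm
  · -- easy direction
    rintro μ hμ
    simp only [Set.mem_iUnion] at hμ
    obtain ⟨S, hS, l, rfl⟩ := hμ
    rw [hI] at hS
    refine map_mem_closure (f := fun S : E →L[ℂ] E => l.comp S)
      (ContinuousLinearMap.compL ℂ E E ℂ l).continuous hS ?_
    rintro y ⟨a, s, ha, rfl⟩
    show l.comp (∑ i, ((a i).comp (T i) + s i • T i)) ∈ (sp : Set (StrongDual ℂ E))
    have : l.comp (∑ i, ((a i).comp (T i) + s i • T i)) =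
        ∑ i, ((l.comp (a i)).comp (T i) + s i • l.comp (T i)) := by
      rw [show l.comp (∑ i, ((a i).comp (T i) + s i • T i)) =
          (ContinuousLinearMap.compL ℂ E E ℂ l) (∑ i, ((a i).comp (T i) + s i • T i)) from rfl,
        map_sum]
      refine Finset.sum_congr rfl fun i _ => ?_
      simp only [map_add, map_smul, ContinuousLinearMap.compL_apply,
        ← ContinuousLinearMap.comp_assoc]
    rw [this]
    refine Submodule.sum_mem _ fun i _ => add_mem ?_ (Submodule.smul_mem _ _ ?_)
    · exact Submodule.subset_span (Set.mem_iUnion.2 ⟨i, ⟨l.comp (a i), rfl⟩⟩)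
    · exact Submodule.subset_span (Set.mem_iUnion.2 ⟨i, ⟨l, rfl⟩⟩)
  · intro μ hμ
    rcases subsingleton_or_nontrivial E with hE | hE
    · have h0I : (0 : E →L[ℂ] E) ∈ I := by
        rw [hI]
        exact subset_closure ⟨0, 0, fun _ => approx_zero, by simp⟩
      have hmu : μ = (0 : StrongDual ℂ E).comp (0 : E →L[ℂ] E) := by
        ext x
        have : x = 0 := Subsingleton.elim x 0
        simp [this]
      exact Set.mem_iUnion.2 ⟨0, Set.mem_iUnion.2 ⟨h0I, ⟨0, hmu.symm⟩⟩⟩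
    · obtain ⟨e, he⟩ := exists_ne (0 : E)
      obtain ⟨g, hg1, hge⟩ := exists_dual_vector ℂ e (norm_ne_zero_iff.2 he)
      have hge0 : g e ≠ 0 := by
        rw [hge]
        exact Complex.ofReal_ne_zero.2 (norm_ne_zero_iff.2 he)
      have hS : μ.smulRight e ∈ I := by
        rw [hI]
        have hcont : Continuous fun ν : StrongDual ℂ E => ν.smulRight e :=
          ((ContinuousLinearMap.smulRightL ℂ E E).flip e).continuous
        refine map_mem_closure (f := fun ν : StrongDual ℂ E => ν.smulRight e)
          hcont hμ ?_
        intro ν hν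
        show ν.smulRight e ∈ G
        induction hν using Submodule.span_induction with
        | mem x hx =>
          obtain ⟨i, l, rfl⟩ := Set.mem_iUnion.1 hx
          refine ⟨fun j => if j = i then l.smulRight e else 0, 0, ?_, ?_⟩
          · intro j
            by_cases h : j = i <;> simp [h, approx_smulRight, approx_zero]
          · have h1 : ∀ j : Fin n, ((if j = i then l.smulRight e else 0).comp (T j)
                + (0 : Fin n → ℂ) j • T j) = if j = i then (l.smulRight e).comp (T j) else 0 := by
              intro j
              by_cases h : j = i <;> simp [h]
            calc (l.comp (T i)).smulRight e = (l.smulRight e).comp (T i) := by ext x; simp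
              _ = ∑ j, (if j = i then (l.smulRight e).comp (T j) else 0) := by
                  rw [Finset.sum_ite_eq' Finset.univ i (fun j => (l.smulRight e).comp (T j))]
                  simp
              _ = _ := (Finset.sum_congr rfl fun j _ => (h1 j)).symm
        | zero =>
          exact ⟨0, 0, fun _ => approx_zero, by ext x; simp⟩
        | add x y hx hy ihx ihy =>
          obtain ⟨a, s, ha, hae⟩ := ihx
          obtain ⟨b, t, hb, hbe⟩ := ihy
          refine ⟨a + b, s + t, fun i => approx_add (ha i) (hb i), ?_⟩
          have hxy : (x + y).smulRight e = x.smulRight e + y.smulRight e := by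
            ext z; simp [add_smul]
          rw [hxy, hae, hbe, ← Finset.sum_add_distrib]
          refine Finset.sum_congr rfl fun i _ => ?_
          simp only [Pi.add_apply, ContinuousLinearMap.add_comp, add_smul]
          abel
        | smul c x hx ihx =>
          obtain ⟨a, s, ha, hae⟩ := ihx
          refine ⟨fun i => c • a i, fun i => c • s i, fun i => approx_smul c (ha i), ?_⟩
          have hcx : (c • x).smulRight e = c • x.smulRight e := by
            ext z; simp [smul_smul]
          rw [hcx, hae, Finset.smul_sum]
          refine Finset.sum_congr rfl fun i _ => ?_
          simp only [smul_add, ContinuousLinearMap.smul_comp, smul_smul, smul_eq_mul]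
      refine Set.mem_iUnion.2 ⟨μ.smulRight e, Set.mem_iUnion.2 ⟨hS, ⟨(g e)⁻¹ • g, ?_⟩⟩⟩
      ext x
      simp only [ContinuousLinearMap.coe_comp', Function.comp_apply,
        ContinuousLinearMap.smulRight_apply, ContinuousLinearMap.coe_smul', Pi.smul_apply,
        map_smul, smul_eq_mul]
      field_simp
end

section
/- Let E be a Banach space and F ⊆ E′ a closed separable linear subspace of the dual. Then there exists an approximable operator T ∈ 𝒜(E) such that the closure of the image of the adjoint T′ equals F. -/
open scoped Topology

variable {E : Type*} [NormedAddCommGroup E] [NormedSpace ℂ E] [CompleteSpace E]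

/-- Hahn–Banach: a continuous functional vanishing on a closed subspace and equal to `1`
at a point outside it. -/
lemma exists_vanishing_functional {E : Type*} [NormedAddCommGroup E] [NormedSpace ℂ E]
    (M : Submodule ℂ E) (hM : IsClosed (M : Set E)) {x : E} (hx : x ∉ M) :
    ∃ f : E →L[ℂ] ℂ, f x = 1 ∧ ∀ y ∈ M, f y = 0 := by
  haveI : IsClosed (M : Set E) := hM
  let πc : E →L[ℂ] E ⧸ M :=
    LinearMap.mkContinuous M.mkQ 1
      (fun y => by simpa using Submodule.Quotient.norm_mk_le M y)
  have hπ : ∀ y : E, πc y = Submodule.Quotient.mk y := fun y => rfl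
  have hπx : πc x ≠ 0 := by
    rw [hπ]
    simpa [Submodule.Quotient.mk_eq_zero] using hx
  obtain ⟨g, -, hg⟩ := exists_dual_vector ℂ (πc x) (norm_ne_zero_iff.mpr hπx)
  have hnx : (‖πc x‖ : ℂ) ≠ 0 := by
    simpa using norm_ne_zero_iff.mpr hπx
  refine ⟨(‖πc x‖ : ℂ)⁻¹ • g.comp πc, ?_, ?_⟩
  · simp only [ContinuousLinearMap.smul_apply, ContinuousLinearMap.comp_apply, hg]
    exact inv_mul_cancel₀ hnx
  · intro y hy
    have : πc y = 0 := by
      rw [hπ]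
      simpa [Submodule.Quotient.mk_eq_zero] using hy
    simp [this]

/-- In an infinite-dimensional normed space, one can find a vector killed by finitely many
given functionals but outside a given finite-dimensional subspace. -/
lemma exists_mem_kers_not_mem {E : Type*} [NormedAddCommGroup E] [NormedSpace ℂ E]
    (hE : ¬ FiniteDimensional ℂ E) (s : Finset (E × (E →L[ℂ] ℂ))) (M : Submodule ℂ E)
    [FiniteDimensional ℂ M] :
    ∃ y : E, (∀ p ∈ s, p.2 y = 0) ∧ y ∉ M := by
  by_contra hcon
  push_neg at hcon
  let Φ : E →ₗ[ℂ] ({p // p ∈ s} → ℂ) := LinearMap.pi fun p => (p.1.2 : E →ₗ[ℂ] ℂ)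
  have hker : LinearMap.ker Φ ≤ M := by
    intro y hy
    refine hcon y (fun p hp => ?_)
    have h0 : Φ y = 0 := hy
    have := congrFun h0 ⟨p, hp⟩
    simpa [Φ] using this
  have hkfd : FiniteDimensional ℂ (LinearMap.ker Φ) :=
    Submodule.finiteDimensional_of_le hker
  have hfg : (⊤ : Submodule ℂ E).FG := by
    apply Submodule.fg_of_fg_map_of_fg_inf_ker Φ
    · rw [Submodule.fg_iff_finiteDimensional]
      haveI : Fintype {p // p ∈ s} := FinsetCoe.fintype s
      haveI : FiniteDimensional ℂ ({p // p ∈ s} → ℂ) := inferInstance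
      infer_instance
    · rw [Submodule.fg_iff_finiteDimensional]
      exact Submodule.finiteDimensional_of_le (le_trans inf_le_right hker)
  exact hE (Module.finite_def.mpr hfg)

/-- A bounded biorthogonal sequence in an infinite-dimensional normed space. -/
lemma exists_biorthogonal_seq {E : Type*} [NormedAddCommGroup E] [NormedSpace ℂ E]
    [CompleteSpace E] (hE : ¬ FiniteDimensional ℂ E) :
    ∃ (b : ℕ → E) (β : ℕ → E →L[ℂ] ℂ), (∀ n, ‖b n‖ ≤ 1) ∧ (∀ n, β n (b n) = 1) ∧
      ∀ m n, m ≠ n → β m (b n) = 0 := by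
  have hstep : ∀ s : Finset (E × (E →L[ℂ] ℂ)),
      (∀ x ∈ s, ‖x.1‖ ≤ 1 ∧ x.2 x.1 = 1) →
      ∃ q : E × (E →L[ℂ] ℂ), (‖q.1‖ ≤ 1 ∧ q.2 q.1 = 1) ∧
        ∀ p ∈ s, p.2 q.1 = 0 ∧ q.2 p.1 = 0 := by
    intro s _
    set M : Submodule ℂ E := Submodule.span ℂ (Prod.fst '' (s : Set (E × (E →L[ℂ] ℂ)))) with hM
    haveI : FiniteDimensional ℂ M :=
      FiniteDimensional.span_of_finite ℂ ((s.finite_toSet).image _)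
    obtain ⟨y, hyker, hyM⟩ := exists_mem_kers_not_mem hE s M
    have hy0 : y ≠ 0 := fun h => hyM (h ▸ M.zero_mem)
    have hny : (‖y‖ : ℂ) ≠ 0 := by simpa using norm_ne_zero_iff.mpr hy0
    set b : E := (‖y‖ : ℂ)⁻¹ • y with hb
    have hbM : b ∉ M := by
      intro hmem
      apply hyM
      have : (‖y‖ : ℂ) • b ∈ M := M.smul_mem _ hmem
      rwa [hb, smul_smul, mul_inv_cancel₀ hny, one_smul] at this
    obtain ⟨β, hβb, hβM⟩ := exists_vanishing_functional M M.closed_of_finiteDimensional hbM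
    refine ⟨(b, β), ⟨?_, hβb⟩, ?_⟩
    · rw [hb, norm_smul]
      simp [norm_inv, inv_mul_cancel₀ (norm_ne_zero_iff.mpr hy0)]
    · intro p hp
      refine ⟨?_, hβM p.1 (Submodule.subset_span ⟨p, hp, rfl⟩)⟩
      rw [hb, map_smul, hyker p hp]
      simp
  obtain ⟨f, hP, hr⟩ := exists_seq_of_forall_finset_exists
      (fun p : E × (E →L[ℂ] ℂ) => ‖p.1‖ ≤ 1 ∧ p.2 p.1 = 1)
      (fun p q => p.2 q.1 = 0 ∧ q.2 p.1 = 0) hstep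
  refine ⟨fun n => (f n).1, fun n => (f n).2, fun n => (hP n).1, fun n => (hP n).2, ?_⟩
  intro m n hmn
  rcases lt_or_gt_of_ne hmn with h | h
  · exact (hr m n h).1
  · exact (hr n m h).2

/-- For a linearly independent finite family of continuous functionals there is a
biorthogonal family of vectors. -/
lemma exists_biorthogonal_vectors {E : Type*} [NormedAddCommGroup E] [NormedSpace ℂ E]
    {m : ℕ} (μ : Fin m → E →L[ℂ] ℂ) (hμ : LinearIndependent ℂ μ) :
    ∃ b : Fin m → E, ∀ i j, μ i (b j) = if i = j then 1 else 0 := by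
  let Φ : E →ₗ[ℂ] (Fin m → ℂ) := LinearMap.pi fun i => (μ i : E →ₗ[ℂ] ℂ)
  have hsurj : LinearMap.range Φ = ⊤ := by
    by_contra hne
    obtain ⟨w, hw⟩ : ∃ w, w ∉ LinearMap.range Φ := by
      by_contra hcon
      push_neg at hcon
      exact hne (Submodule.eq_top_iff'.mpr hcon)
    obtain ⟨f, hfw, hf0⟩ := exists_vanishing_functional (LinearMap.range Φ)
      (Submodule.closed_of_finiteDimensional _) hw
    set c : Fin m → ℂ := fun i => f (Pi.single i 1) with hc
    have hfv : ∀ v : Fin m → ℂ, f v = ∑ i, v i * c i := by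
      intro v
      have hv : v = ∑ i, v i • (Pi.single i (1 : ℂ) : Fin m → ℂ) := by
        ext j
        simp [Pi.single_apply, eq_comm]
      conv_lhs => rw [hv]
      rw [map_sum]
      simp [hc, smul_eq_mul]
    have hzero : ∑ i, c i • μ i = 0 := by
      ext x
      have h1 : f (Φ x) = 0 := hf0 _ (LinearMap.mem_range_self Φ x)
      have h2 : f (Φ x) = ∑ i, μ i x * c i := hfv (Φ x)
      simpa [mul_comm] using h2.symm.trans h1
    have hcall : ∀ i, c i = 0 := by
      have := Fintype.linearIndependent_iff.mp hμ c hzero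
      exact this
    have hw0 : f w = 0 := by
      rw [hfv w]
      simp [hcall]
    rw [hfw] at hw0
    exact one_ne_zero hw0
  have hex : ∀ j : Fin m, ∃ x : E, Φ x = Pi.single j 1 := by
    intro j
    have : Pi.single j (1:ℂ) ∈ LinearMap.range Φ := hsurj ▸ Submodule.mem_top
    exact this
  choose b hb using hex
  refine ⟨b, fun i j => ?_⟩
  have := congrFun (hb j) i
  simpa [Φ, Pi.single_apply, eq_comm] using this

set_option maxHeartbeats 1600000 in
/-- Let `E` be a Banach space and `F ⊆ E′` a closed separable linear subspace
of the dual. Then there is an approximable operator `T ∈ 𝒜(E)` with `closure (im T′) = F`. -/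
theorem exists_approximable_with_imAdj_closure_eq
    (F : Submodule ℂ (StrongDual ℂ E)) (hFc : IsClosed (F : Set (StrongDual ℂ E)))
    (hFs : TopologicalSpace.IsSeparable (F : Set (StrongDual ℂ E))) :
    ∃ T ∈ ApproxOps E, closure (imAdj T) = (F : Set (StrongDual ℂ E)) := by
  by_cases hE : FiniteDimensional ℂ E
  · -- Finite-dimensional case: a finite-rank operator does the job exactly.
    haveI : FiniteDimensional ℂ (StrongDual ℂ E) := inferInstance
    haveI : FiniteDimensional ℂ F := inferInstance
    set m := Module.finrank ℂ F with hm
    haveI : Module.Free ℂ F := Module.Free.of_divisionRing ℂ F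
    let bF := Module.finBasis ℂ F
    let μ : Fin m → StrongDual ℂ E := fun i => ((bF i : F) : StrongDual ℂ E)
    have hμli : LinearIndependent ℂ μ :=
      bF.linearIndependent.map_injOn F.subtype (Set.injOn_of_injective Subtype.val_injective)
    obtain ⟨b, hb⟩ := exists_biorthogonal_vectors μ hμli
    set T : E →L[ℂ] E := ∑ j, (μ j).smulRight (b j) with hT
    have hcomp : ∀ l : StrongDual ℂ E, l.comp T = ∑ j, l (b j) • μ j := by
      intro l
      ext x
      simp [hT, ContinuousLinearMap.sum_apply, mul_comm]
    have himadj : imAdj T ⊆ (F : Set (StrongDual ℂ E)) := by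
      rintro _ ⟨l, rfl⟩
      show ContinuousLinearMap.comp l T ∈ (F : Set (StrongDual ℂ E))
      rw [hcomp l]
      exact Submodule.sum_mem F fun j _ => F.smul_mem _ (bF j).2
    have hFsub : (F : Set (StrongDual ℂ E)) ⊆ imAdj T := by
      intro f hf
      have hβ : ∀ k : Fin m, ∃ β : E →L[ℂ] ℂ, β (b k) = 1 ∧ ∀ j, j ≠ k → β (b j) = 0 := by
        intro k
        set Mk : Submodule ℂ E := Submodule.span ℂ (b '' {j | j ≠ k}) with hMk
        haveI : FiniteDimensional ℂ Mk :=
          FiniteDimensional.span_of_finite ℂ ((Set.toFinite _).image _)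
        have hker : Mk ≤ LinearMap.ker (μ k : E →ₗ[ℂ] ℂ) := by
          rw [hMk, Submodule.span_le]
          rintro _ ⟨j, hj, rfl⟩
          have := hb k j
          simp only [if_neg (Ne.symm hj)] at this
          simpa using this
        have hbk : b k ∉ Mk := by
          intro hmem
          have h0 : μ k (b k) = 0 := hker hmem
          have h1 := hb k k
          rw [if_pos rfl] at h1
          rw [h0] at h1
          exact one_ne_zero h1.symm
        obtain ⟨β, hβ1, hβ0⟩ := exists_vanishing_functional Mk
          Mk.closed_of_finiteDimensional hbk
        exact ⟨β, hβ1, fun j hj => hβ0 _ (Submodule.subset_span ⟨j, hj, rfl⟩)⟩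
      choose β hβ1 hβ0 using hβ
      set l : StrongDual ℂ E := ∑ j, (bF.repr ⟨f, hf⟩ j) • β j with hl
      refine ⟨l, ?_⟩
      show ContinuousLinearMap.comp l T = f
      have hlb : ∀ k, l (b k) = bF.repr ⟨f, hf⟩ k := by
        intro k
        rw [hl]
        rw [ContinuousLinearMap.sum_apply]
        rw [Finset.sum_eq_single k]
        · simp [hβ1]
        · intro j _ hj
          simp [hβ0 j k (Ne.symm hj)]
        · intro h
          exact absurd (Finset.mem_univ k) h
      rw [hcomp l]
      have hrepr : ∑ j, bF.repr ⟨f, hf⟩ j • μ j = f := by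
        have := bF.sum_repr ⟨f, hf⟩
        calc ∑ j, bF.repr ⟨f, hf⟩ j • μ j
            = (F.subtype : F →ₗ[ℂ] StrongDual ℂ E) (∑ j, bF.repr ⟨f, hf⟩ j • bF j) := by
              rw [map_sum]; simp [μ]
          _ = f := by rw [this]; rfl
      rw [← hrepr]
      exact Finset.sum_congr rfl fun j _ => by rw [hlb j]
    refine ⟨T, ?_, ?_⟩
    · exact subset_closure (by
        show FiniteDimensional ℂ (LinearMap.range (T : E →ₗ[ℂ] E))
        infer_instance)
    · exact subset_antisymm (closure_minimal himadj hFc) (hFsub.trans subset_closure)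
  · -- Infinite-dimensional case.
    haveI : TopologicalSpace.SeparableSpace ↥(F : Set (StrongDual ℂ E)) :=
      hFs.separableSpace
    haveI : Nonempty ↥(F : Set (StrongDual ℂ E)) := ⟨⟨0, F.zero_mem⟩⟩
    obtain ⟨u0, hu0⟩ := TopologicalSpace.exists_dense_seq ↥(F : Set (StrongDual ℂ E))
    set u : ℕ → StrongDual ℂ E := fun n => (u0 n : StrongDual ℂ E) with hu
    have humem : ∀ n, u n ∈ F := fun n => (u0 n).2
    have hudense : (F : Set (StrongDual ℂ E)) ⊆ closure (Set.range u) := by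
      intro f hf
      have h1 : (⟨f, hf⟩ : ↥(F : Set (StrongDual ℂ E))) ∈ closure (Set.range u0) := hu0 _
      have h2 := image_closure_subset_closure_image continuous_subtype_val
        (Set.mem_image_of_mem Subtype.val h1)
      have h3 : Subtype.val '' Set.range u0 = Set.range u := by
        rw [← Set.range_comp]; rfl
      rwa [h3] at h2
    set c : ℕ → ℝ := fun n => max 1 ‖u n‖ with hcdef
    have hc1 : ∀ n, (1:ℝ) ≤ c n := fun n => le_max_left _ _
    have hcpos : ∀ n, (0:ℝ) < c n := fun n => lt_of_lt_of_le zero_lt_one (hc1 n)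
    have hc0 : ∀ n, ((c n : ℝ) : ℂ) ≠ 0 := fun n => by
      simpa using (hcpos n).ne'
    set lam : ℕ → StrongDual ℂ E := fun n => ((c n : ℝ) : ℂ)⁻¹ • u n with hlam
    have hlmem : ∀ n, lam n ∈ F := fun n => F.smul_mem _ (humem n)
    have hlnorm : ∀ n, ‖lam n‖ ≤ 1 := by
      intro n
      show ‖((c n : ℝ) : ℂ)⁻¹ • u n‖ ≤ 1
      rw [norm_smul, norm_inv, Complex.norm_real, Real.norm_eq_abs, abs_of_pos (hcpos n)]
      rw [inv_mul_le_iff₀ (hcpos n), mul_one]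
      exact le_max_right _ _
    have huc : ∀ n, u n = ((c n : ℝ) : ℂ) • lam n := by
      intro n
      rw [hlam, smul_smul, mul_inv_cancel₀ (hc0 n), one_smul]
    obtain ⟨b, β, hbnorm, hβ1, hβ0⟩ := exists_biorthogonal_seq hE
    set g : ℕ → E →L[ℂ] E := fun n => ((2:ℂ)⁻¹)^n • (lam n).smulRight (b n) with hg
    have hgnorm : ∀ n, ‖g n‖ ≤ (1/2:ℝ)^n := by
      intro n
      show ‖((2:ℂ)⁻¹)^n • (lam n).smulRight (b n)‖ ≤ (1/2:ℝ)^n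
      rw [norm_smul, norm_pow, norm_inv, ContinuousLinearMap.norm_smulRight_apply]
      have h2 : ‖(2:ℂ)‖ = (2:ℝ) := by norm_num
      rw [h2]
      calc (2:ℝ)⁻¹^n * (‖lam n‖ * ‖b n‖) ≤ (2:ℝ)⁻¹^n * (1 * 1) := by
            apply mul_le_mul_of_nonneg_left _ (by positivity)
            exact mul_le_mul (hlnorm n) (hbnorm n) (norm_nonneg _) zero_le_one
        _ = (1/2:ℝ)^n := by norm_num
    have hsum : Summable g :=
      Summable.of_norm_bounded summable_geometric_two hgnorm
    set T : E →L[ℂ] E := ∑' n, g n with hT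
    have happrox : T ∈ ApproxOps E := by
      apply mem_closure_of_tendsto hsum.hasSum.tendsto_sum_nat
      filter_upwards with n
      show FiniteDimensional ℂ
        (LinearMap.range ((∑ i ∈ Finset.range n, g i : E →L[ℂ] E) : E →ₗ[ℂ] E))
      haveI : FiniteDimensional ℂ (Submodule.span ℂ (b '' {i | i < n})) :=
        FiniteDimensional.span_of_finite ℂ ((Set.finite_Iio n).image b)
      refine Submodule.finiteDimensional_of_le (S₂ := Submodule.span ℂ (b '' {i | i < n})) ?_
      rintro _ ⟨x, rfl⟩
      have hval : (∑ i ∈ Finset.range n, g i) x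
          = ∑ i ∈ Finset.range n, (((2:ℂ)⁻¹)^i * lam i x) • b i := by
        rw [ContinuousLinearMap.sum_apply]
        refine Finset.sum_congr rfl fun i _ => ?_
        simp [hg, smul_smul]
      show (∑ i ∈ Finset.range n, g i) x ∈ _
      rw [hval]
      refine Submodule.sum_mem _ fun i hi => Submodule.smul_mem _ _ ?_
      exact Submodule.subset_span ⟨i, Finset.mem_range.mp hi, rfl⟩
    have hcomp : ∀ l : StrongDual ℂ E,
        HasSum (fun n => (((2:ℂ)⁻¹)^n * l (b n)) • lam n) (l.comp T) := by
      intro l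
      have h1 := hsum.hasSum.mapL (ContinuousLinearMap.compL ℂ E E ℂ l)
      have h2 : (fun n => (ContinuousLinearMap.compL ℂ E E ℂ l) (g n))
          = fun n => (((2:ℂ)⁻¹)^n * l (b n)) • lam n := by
        funext n
        ext x
        simp [hg, mul_comm, mul_assoc, mul_left_comm]
      rwa [h2] at h1
    have himadj : imAdj T ⊆ (F : Set (StrongDual ℂ E)) := by
      rintro _ ⟨l, rfl⟩
      show l.comp T ∈ (F : Set (StrongDual ℂ E))
      refine hFc.mem_of_tendsto (hcomp l).tendsto_sum_nat
        (Filter.Eventually.of_forall fun n => ?_)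
      exact Submodule.sum_mem F fun i _ => F.smul_mem _ (hlmem i)
    have hrange : Set.range u ⊆ imAdj T := by
      rintro _ ⟨k, rfl⟩
      refine ⟨(((c k : ℝ) : ℂ) * (2:ℂ)^k) • β k, ?_⟩
      show ContinuousLinearMap.comp ((((c k : ℝ) : ℂ) * (2:ℂ)^k) • β k) T = u k
      have h := (hcomp ((((c k : ℝ) : ℂ) * (2:ℂ)^k) • β k)).tsum_eq
      rw [← h, tsum_eq_single k]
      · simp only [ContinuousLinearMap.smul_apply, hβ1 k, smul_eq_mul, mul_one]
        rw [huc k]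
        congr 1
        rw [← mul_assoc]
        rw [mul_comm (((2:ℂ)⁻¹)^k)]
        rw [mul_assoc, ← mul_pow]
        norm_num
      · intro n hn
        simp [hβ0 k n (Ne.symm hn)]
        exact zero_smul ℂ (lam n)
    refine ⟨T, happrox, subset_antisymm (closure_minimal himadj hFc) ?_⟩
    exact hudense.trans (closure_mono hrange)
end

section
/- Let A be a Banach algebra which is weak*-dense in its multiplier algebra M(A), where M(A) is a dual Banach algebra. Suppose every closed left ideal I of A satisfies I = closure(A♯μ₁ + ⋯ + A♯μₙ) for some n and μ₁,…,μₙ ∈ M(A). Then M(A) is weak*-topologically left Noetherian. In particular this holds if A is norm-topologically left Noetherian. -/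
open MultiplierAlgebra

variable {A : Type*} [NonUnitalNormedRing A] [NormedSpace ℂ A]
  [SMulCommClass ℂ A A] [IsScalarTower ℂ A A] [CompleteSpace A]

private lemma stmt17_coe_mul_coe (a b : A) :
    (DoubleCentralizer.coe ℂ (a * b) : 𝓜(ℂ, A)) =
      DoubleCentralizer.coe ℂ a * DoubleCentralizer.coe ℂ b := by
  refine DoubleCentralizer.ext ℂ A _ _ (Prod.ext ?_ ?_)
  · ext x
    exact mul_assoc a b x
  · ext x
    exact (mul_assoc x a b).symm

private lemma stmt17_coe_zero : (DoubleCentralizer.coe ℂ (0 : A) : 𝓜(ℂ, A)) = 0 := by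
  refine DoubleCentralizer.ext ℂ A _ _ (Prod.ext ?_ ?_)
  · ext x; exact zero_mul x
  · ext x; exact mul_zero x

/-- The coercion `A → 𝓜(ℂ, A)` as a linear map. -/
private noncomputable def stmt17_coeL : A →ₗ[ℂ] 𝓜(ℂ, A) where
  toFun a := DoubleCentralizer.coe ℂ a
  map_add' a b := DoubleCentralizer.ext ℂ A _ _ <| Prod.ext
    (map_add (ContinuousLinearMap.mul ℂ A) a b)
    (map_add (ContinuousLinearMap.mul ℂ A).flip a b)
  map_smul' c a := DoubleCentralizer.ext ℂ A _ _ <| Prod.ext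
    (map_smul (ContinuousLinearMap.mul ℂ A) c a)
    (map_smul (ContinuousLinearMap.mul ℂ A).flip c a)

private lemma stmt17_coe_norm_cont :
    Continuous (DoubleCentralizer.coe ℂ : A → 𝓜(ℂ, A)) := by
  rw [DoubleCentralizer.isUniformEmbedding_toProdMulOpposite.isEmbedding.toIsInducing.continuous_iff]
  exact ((ContinuousLinearMap.mul ℂ A).continuous).prodMk
    (MulOpposite.continuous_op.comp (ContinuousLinearMap.mul ℂ A).flip.continuous)

private lemma stmt17_t2_induced {α β : Type*} [tβ : TopologicalSpace β] [T2Space β]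
    (f : α → β) (hf : Function.Injective f) :
    @T2Space α (TopologicalSpace.induced f tβ) := by
  letI := TopologicalSpace.induced f tβ
  exact Topology.IsEmbedding.t2Space ⟨⟨rfl⟩, hf⟩

private lemma stmt17_id_cont_induced {α β : Type*} [tα : TopologicalSpace α]
    [tβ : TopologicalSpace β] (f : α → β) (hf : Continuous f) :
    @Continuous α α tα (TopologicalSpace.induced f tβ) id :=
  continuous_id_iff_le.2 (continuous_iff_le_induced.1 hf)

section Weak

variable {X' : Type*} [NormedAddCommGroup X'] [NormedSpace ℂ X'] in
private lemma stmt17_hid (Φ : 𝓜(ℂ, A) ≃L[ℂ] StrongDual ℂ X') :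
    @Continuous _ _ UniformSpace.toTopologicalSpace
      (TopologicalSpace.induced (fun m => StrongDual.toWeakDual (Φ m)) inferInstance)
      (id : 𝓜(ℂ, A) → 𝓜(ℂ, A)) :=
  stmt17_id_cont_induced _ (NormedSpace.Dual.toWeakDual_continuous.comp Φ.continuous)

variable {X' : Type*} [NormedAddCommGroup X'] [NormedSpace ℂ X'] in
private lemma stmt17_ht2 (Φ : 𝓜(ℂ, A) ≃L[ℂ] StrongDual ℂ X') :
    @T2Space _ (TopologicalSpace.induced
      (fun m => StrongDual.toWeakDual (Φ m)) inferInstance) :=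
  stmt17_t2_induced _ (fun x y hxy => Φ.injective (StrongDual.toWeakDual.injective hxy))

variable {X : Type*} [NormedAddCommGroup X] [NormedSpace ℂ X]
  (Φ : 𝓜(ℂ, A) ≃L[ℂ] StrongDual ℂ X)
  (τ : TopologicalSpace 𝓜(ℂ, A))

/-- Key: under the density hypothesis, `A` is a left ideal in `𝓜(ℂ, A)`. -/
private lemma stmt17_coe_mul_mult
    (hτ : τ = TopologicalSpace.induced
      (fun m => StrongDual.toWeakDual (Φ m)) inferInstance)
    (hsep : ∀ m : 𝓜(ℂ, A), @Continuous _ _ τ τ (fun x => m * x) ∧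
      @Continuous _ _ τ τ (fun x => x * m))
    (hdense : @Dense _ τ (Set.range (DoubleCentralizer.coe ℂ : A → 𝓜(ℂ, A))))
    (a : A) (μ : 𝓜(ℂ, A)) :
    DoubleCentralizer.coe ℂ a * μ = DoubleCentralizer.coe ℂ (μ.snd a) := by
  have ht2 : @T2Space _ τ := by
    rw [hτ]; exact stmt17_ht2 Φ
  set δ : 𝓜(ℂ, A) := DoubleCentralizer.coe ℂ a * μ - DoubleCentralizer.coe ℂ (μ.snd a) with hδ
  have key0 : ∀ b : A, δ * DoubleCentralizer.coe ℂ b = 0 := by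
    intro b
    have h1 : (DoubleCentralizer.coe ℂ a * μ) * DoubleCentralizer.coe ℂ b =
        DoubleCentralizer.coe ℂ (μ.snd a * b) := by
      refine DoubleCentralizer.ext ℂ A _ _ (Prod.ext ?_ ?_)
      · ext x
        show a * μ.fst (b * x) = (μ.snd a * b) * x
        rw [← μ.central, ← mul_assoc]
      · ext x
        show μ.snd (x * a) * b = x * (μ.snd a * b)
        rw [μ.central, μ.central, ← mul_assoc]
    have h2 : DoubleCentralizer.coe ℂ (μ.snd a) * DoubleCentralizer.coe ℂ b =
        DoubleCentralizer.coe ℂ (μ.snd a * b) := (stmt17_coe_mul_coe _ _).symm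
    rw [hδ, sub_mul, h1, h2, sub_self]
  have hc : @Continuous _ _ τ τ (fun x => δ * x) := (hsep δ).1
  have hc0 : @Continuous _ _ τ τ (fun _ : 𝓜(ℂ, A) => (0 : 𝓜(ℂ, A))) :=
    continuous_const
  have hcl : @IsClosed _ τ {x : 𝓜(ℂ, A) | δ * x = 0} := by
    haveI := ht2
    exact isClosed_eq hc hc0
  have hall : δ * 1 = 0 := by
    have hx : (1 : 𝓜(ℂ, A)) ∈ @closure _ τ
        (Set.range (DoubleCentralizer.coe ℂ : A → 𝓜(ℂ, A))) := by
      rw [hdense.closure_eq]; trivial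
    exact closure_minimal (by rintro _ ⟨b, rfl⟩; exact key0 b) hcl hx
  rw [mul_one, hδ, sub_eq_zero] at hall
  exact hall

end Weak

/-- Let `A` be a Banach algebra which is weak*-dense in its multiplier algebra
`M(A) = 𝓜(ℂ, A)`, where `M(A)` is a dual Banach algebra (with predual `X`, weak* topology `τ`,
and separately weak*-continuous multiplication). Suppose every closed left ideal `I` of `A`
satisfies `I = closure(A♯μ₁ + ⋯ + A♯μₙ)` for some `n` and `μ₁, …, μₙ ∈ M(A)`. Then `M(A)` is
weak*-topologically left Noetherian: every weak*-closed left ideal of `M(A)` is the weak*-closure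
of `M(A)μ₁ + ⋯ + M(A)μₙ` for some of its elements `μ₁, …, μₙ`. -/
theorem multiplier_weakStar_topologically_left_noetherian
    (X : Type*) [NormedAddCommGroup X] [NormedSpace ℂ X]
    (Φ : 𝓜(ℂ, A) ≃L[ℂ] StrongDual ℂ X)
    (τ : TopologicalSpace 𝓜(ℂ, A))
    (hτ : τ = TopologicalSpace.induced
      (fun m => StrongDual.toWeakDual (Φ m)) inferInstance)
    (hsep : ∀ m : 𝓜(ℂ, A), @Continuous _ _ τ τ (fun x => m * x) ∧
      @Continuous _ _ τ τ (fun x => x * m))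
    -- `A` is weak*-dense in `M(A)`
    (hdense : @Dense _ τ (Set.range (DoubleCentralizer.coe ℂ : A → 𝓜(ℂ, A))))
    -- every closed left ideal of `A` is the norm closure of `A♯μ₁ + ⋯ + A♯μₙ` for
    -- suitable multipliers `μᵢ ∈ M(A)`
    (hgen : ∀ I : Submodule ℂ A, IsClosed (I : Set A) → (∀ a : A, ∀ x ∈ I, a * x ∈ I) →
      ∃ (n : ℕ) (μ : Fin n → 𝓜(ℂ, A)),
        (DoubleCentralizer.coe ℂ : A → 𝓜(ℂ, A)) '' (I : Set A) =
          closure {y : 𝓜(ℂ, A) | ∃ (c : Fin n → A) (s : Fin n → ℂ),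
            y = ∑ i, (DoubleCentralizer.coe ℂ (c i) * μ i + s i • μ i)}) :
    -- conclusion: `M(A)` is weak*-topologically left Noetherian
    ∀ J : Submodule ℂ 𝓜(ℂ, A), @IsClosed _ τ (J : Set 𝓜(ℂ, A)) →
      (∀ m : 𝓜(ℂ, A), ∀ x ∈ J, m * x ∈ J) →
      ∃ (n : ℕ) (μ : Fin n → 𝓜(ℂ, A)), (∀ i, μ i ∈ J) ∧
        (J : Set 𝓜(ℂ, A)) = @closure _ τ {y : 𝓜(ℂ, A) |
          ∃ c : Fin n → 𝓜(ℂ, A), y = ∑ i, c i * μ i} := by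
  intro J hJc hJi
  have hid : @Continuous _ _ UniformSpace.toTopologicalSpace τ (id : 𝓜(ℂ, A) → 𝓜(ℂ, A)) := by
    rw [hτ]; exact stmt17_hid Φ
  have hcoeτ : @Continuous A 𝓜(ℂ, A) _ τ (DoubleCentralizer.coe ℂ : A → 𝓜(ℂ, A)) :=
    @Continuous.comp A 𝓜(ℂ, A) 𝓜(ℂ, A) _ UniformSpace.toTopologicalSpace τ _ _ hid
      stmt17_coe_norm_cont
  have hkey : ∀ (a : A) (μ : 𝓜(ℂ, A)),
      DoubleCentralizer.coe ℂ a * μ = DoubleCentralizer.coe ℂ (μ.snd a) :=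
    stmt17_coe_mul_mult Φ τ hτ hsep hdense
  -- the closed left ideal `I = A ∩ J`
  set I : Submodule ℂ A := J.comap stmt17_coeL with hI
  have hIset : (I : Set A) = (DoubleCentralizer.coe ℂ : A → 𝓜(ℂ, A)) ⁻¹' (J : Set 𝓜(ℂ, A)) := rfl
  have hIc : IsClosed (I : Set A) := by
    rw [hIset]
    exact hJc.preimage hcoeτ
  have hIi : ∀ a : A, ∀ x ∈ I, a * x ∈ I := by
    intro a x hx
    show DoubleCentralizer.coe ℂ (a * x) ∈ J
    rw [stmt17_coe_mul_coe]
    exact hJi _ _ hx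
  obtain ⟨n, μ, hμ⟩ := hgen I hIc hIi
  have hμJ : ∀ i, μ i ∈ J := by
    intro i
    have hS : μ i ∈ {y : 𝓜(ℂ, A) | ∃ (c : Fin n → A) (s : Fin n → ℂ),
        y = ∑ j, (DoubleCentralizer.coe ℂ (c j) * μ j + s j • μ j)} := by
      refine ⟨fun _ => 0, Pi.single i 1, ?_⟩
      simp [stmt17_coe_zero, Pi.single_apply, ite_smul]
    have hmem : μ i ∈ (DoubleCentralizer.coe ℂ : A → 𝓜(ℂ, A)) '' (I : Set A) := by
      rw [hμ]; exact subset_closure hS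
    obtain ⟨a, haI, hae⟩ := hmem
    rw [← hae]
    exact haI
  refine ⟨n, μ, hμJ, ?_⟩
  set T : Set 𝓜(ℂ, A) := {y : 𝓜(ℂ, A) | ∃ c : Fin n → 𝓜(ℂ, A), y = ∑ i, c i * μ i} with hT
  have hST : {y : 𝓜(ℂ, A) | ∃ (c : Fin n → A) (s : Fin n → ℂ),
      y = ∑ j, (DoubleCentralizer.coe ℂ (c j) * μ j + s j • μ j)} ⊆ T := by
    rintro _ ⟨c, s, rfl⟩
    refine ⟨fun j => DoubleCentralizer.coe ℂ (c j) + s j • 1, ?_⟩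
    refine Finset.sum_congr rfl fun j _ => ?_
    rw [add_mul, smul_mul_assoc, one_mul]
  have hIT : (DoubleCentralizer.coe ℂ : A → 𝓜(ℂ, A)) '' (I : Set A) ⊆ @closure _ τ T := by
    rw [hμ]
    exact closure_mono hST
  apply Set.Subset.antisymm
  · -- J ⊆ closure_τ T
    intro m hm
    have h1 : (1 : 𝓜(ℂ, A)) ∈ @closure _ τ
        (Set.range (DoubleCentralizer.coe ℂ : A → 𝓜(ℂ, A))) := by
      rw [hdense.closure_eq]; trivial
    have h2 : m ∈ @closure _ τ ((fun x => x * m) ''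
        Set.range (DoubleCentralizer.coe ℂ : A → 𝓜(ℂ, A))) := by
      exact image_closure_subset_closure_image (hsep m).2 ⟨1, h1, one_mul m⟩
    have h3 : ((fun x => x * m) '' Set.range (DoubleCentralizer.coe ℂ : A → 𝓜(ℂ, A))) ⊆
        (DoubleCentralizer.coe ℂ : A → 𝓜(ℂ, A)) '' (I : Set A) := by
      rintro _ ⟨_, ⟨a, rfl⟩, rfl⟩
      refine ⟨m.snd a, ?_, (hkey a m).symm⟩
      show DoubleCentralizer.coe ℂ (m.snd a) ∈ J
      rw [← hkey a m]
      exact hJi _ _ hm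
    have h4 : m ∈ @closure _ τ ((DoubleCentralizer.coe ℂ : A → 𝓜(ℂ, A)) '' (I : Set A)) :=
      closure_mono h3 h2
    exact closure_minimal hIT isClosed_closure h4
  · -- closure_τ T ⊆ J
    refine closure_minimal ?_ hJc
    rintro _ ⟨c, rfl⟩
    exact Submodule.sum_mem J fun i _ => hJi _ _ (hμJ i)
end

section
/- Let A be a compliant Banach algebra with a bounded approximate identity. Then the map I ↦ weak*-closure of I is a bijection from the set of closed left ideals of A onto the set of weak*-closed left ideals of M(A), with inverse J ↦ A ∩ J. -/
open MultiplierAlgebra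
open Topology

set_option linter.unusedSectionVars false

theorem aux_exists_dual_annihilator {E : Type*} [NormedAddCommGroup E] [NormedSpace ℂ E]
    (I : Submodule ℂ E) (hI : IsClosed (I : Set E)) {x : E} (hx : x ∉ I) :
    ∃ g : E →L[ℂ] ℂ, (∀ a ∈ I, g a = 0) ∧ g x ≠ 0 := by
  obtain ⟨f, u, hu, hux⟩ := RCLike.geometric_hahn_banach_closed_point (𝕜 := ℂ)
    (Submodule.convex (I.restrictScalars ℝ)) hI hx
  have h0u : 0 < u := by simpa using hu 0 I.zero_mem
  refine ⟨f, ?_, ?_⟩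
  · intro a ha
    by_contra hfa
    have hns : 0 < Complex.normSq (f a) := Complex.normSq_pos.2 hfa
    set t : ℝ := (|u| + 1) / Complex.normSq (f a) with ht
    have hmem : ((t : ℂ) * (starRingEnd ℂ) (f a)) • a ∈ I :=
      I.smul_mem _ ha
    have hlt := hu _ hmem
    have hval : f (((t : ℂ) * (starRingEnd ℂ) (f a)) • a) = ((|u| + 1 : ℝ) : ℂ) := by
      rw [map_smul, smul_eq_mul, mul_assoc, mul_comm ((starRingEnd ℂ) (f a)) (f a),
        Complex.mul_conj, ← Complex.ofReal_mul, ht, div_mul_cancel₀ _ hns.ne']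
    rw [hval] at hlt
    rw [show RCLike.re (((|u| + 1 : ℝ) : ℂ)) = |u| + 1 from Complex.ofReal_re _] at hlt
    have := le_abs_self u
    linarith
  · intro h
    rw [h] at hux
    rw [map_zero] at hux
    linarith

theorem aux_clusterPt_lim {Z : Type*} [TopologicalSpace Z] [T2Space Z] {M : Type*}
    {τ : TopologicalSpace M} {ι : Type*} {l : Filter ι} [l.NeBot] {F : ι → M} {μ : M}
    (H : @ClusterPt M τ μ (Filter.map F l)) {h : M → Z} (hcont : @Continuous M Z τ _ h)
    {d : Z} (hd : Filter.Tendsto (fun i => h (F i)) l (nhds d)) : h μ = d := by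
  have H2 : ClusterPt (h μ) (Filter.map (fun i => h (F i)) l) := by
    have hT : Filter.Tendsto h (Filter.map F l) (Filter.map (fun i => h (F i)) l) := by
      rw [Filter.tendsto_map'_iff]; exact Filter.tendsto_map
    exact H.map (@Continuous.continuousAt _ _ τ _ _ _ hcont) hT
  exact eq_of_nhds_neBot (H2.mono hd)


variable {A : Type*} [NonUnitalNormedRing A] [NormedSpace ℂ A]
  [SMulCommClass ℂ A A] [IsScalarTower ℂ A A] [CompleteSpace A]

theorem aux_coe_mul
    (hfaith : ∀ x : A, ((∀ a : A, a * x = 0) → x = 0) ∧ ((∀ a : A, x * a = 0) → x = 0))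
    (a : A) (m : 𝓜(ℂ, A)) :
    (DoubleCentralizer.coe ℂ a) * m = DoubleCentralizer.coe ℂ (m.snd a) := by
  refine DoubleCentralizer.ext ℂ A _ _ (Prod.ext ?_ ?_)
  · refine ContinuousLinearMap.ext fun x => ?_
    show (DoubleCentralizer.coe ℂ a).fst (m.fst x) = (DoubleCentralizer.coe ℂ (m.snd a)).fst x
    show a * m.fst x = m.snd a * x
    exact (m.central a x).symm
  · refine ContinuousLinearMap.ext fun x => ?_
    show m.snd ((DoubleCentralizer.coe ℂ a).snd x) = (DoubleCentralizer.coe ℂ (m.snd a)).snd x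
    show m.snd (x * a) = x * m.snd a
    have hz : ∀ y : A, (m.snd (x * a) - x * m.snd a) * y = 0 := by
      intro y
      rw [sub_mul, m.central (x * a) y, mul_assoc x a (m.fst y), mul_assoc x (m.snd a) y,
        m.central a y, sub_self]
    have := (hfaith _).2 hz
    rw [sub_eq_zero] at this
    exact this

theorem aux_bound {X : Type*} [NormedAddCommGroup X] [NormedSpace ℂ X]
    (Φ : 𝓜(ℂ, A) ≃L[ℂ] StrongDual ℂ X) :
    ∃ K : ℝ, 0 ≤ K ∧ ∀ z : 𝓜(ℂ, A), ‖Φ z‖ ≤ K * ‖z‖ :=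
  ⟨‖Φ.toContinuousLinearMap‖, ContinuousLinearMap.opNorm_nonneg _, fun z => Φ.toContinuousLinearMap.le_opNorm z⟩

theorem aux_symm {X : Type*} [NormedAddCommGroup X] [NormedSpace ℂ X]
    (Φ : 𝓜(ℂ, A) ≃L[ℂ] StrongDual ℂ X) (φ : WeakDual ℂ X) :
    ∃ μ : 𝓜(ℂ, A), StrongDual.toWeakDual (Φ μ) = φ :=
  ⟨Φ.symm (WeakDual.toStrongDual φ), by rw [Φ.apply_symm_apply]; rfl⟩

/-- Let `A` be a compliant Banach algebra (faithful, `M(A) = 𝓜(ℂ, A)` a dual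
Banach algebra, and for each `a ∈ A` the maps `μ ↦ μa` and `μ ↦ aμ` from `M(A)` to `A`
weak*-to-weak continuous) with a bounded approximate identity. Then `I ↦ weak*-closure of I` is a
bijection from the closed left ideals of `A` onto the weak*-closed left ideals of `M(A)`, with
inverse `J ↦ A ∩ J`. -/
theorem compliant_ideal_correspondence
    -- `A` is faithful
    (hfaith : ∀ x : A, ((∀ a : A, a * x = 0) → x = 0) ∧ ((∀ a : A, x * a = 0) → x = 0))
    -- bounded approximate identity
    (bai : ∃ (ι : Type) (l : Filter ι) (e : ι → A) (C : ℝ), l.NeBot ∧ (∀ i, ‖e i‖ ≤ C) ∧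
      (∀ a : A, Filter.Tendsto (fun i => e i * a) l (nhds a)) ∧
      (∀ a : A, Filter.Tendsto (fun i => a * e i) l (nhds a)))
    -- `M(A)` is a dual Banach algebra, with weak* topology `τ`
    (X : Type*) [NormedAddCommGroup X] [NormedSpace ℂ X]
    (Φ : 𝓜(ℂ, A) ≃L[ℂ] StrongDual ℂ X)
    (τ : TopologicalSpace 𝓜(ℂ, A))
    (hτ : τ = TopologicalSpace.induced
      (fun m => StrongDual.toWeakDual (Φ m)) inferInstance)
    (hsep : ∀ m : 𝓜(ℂ, A), @Continuous _ _ τ τ (fun x => m * x) ∧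
      @Continuous _ _ τ τ (fun x => x * m))
    -- compliance: `μ ↦ aμ` and `μ ↦ μa` are weak*-to-weak continuous maps `M(A) → A`
    (hcompl : ∀ (a : A) (f : StrongDual ℂ A),
      @Continuous _ _ τ _ (fun μ : 𝓜(ℂ, A) => f (μ.snd a)) ∧
      @Continuous _ _ τ _ (fun μ : 𝓜(ℂ, A) => f (μ.fst a))) :
    -- the correspondence
    (∀ I : Submodule ℂ A, IsClosed (I : Set A) → (∀ a : A, ∀ x ∈ I, a * x ∈ I) →
      (DoubleCentralizer.coe ℂ : A → 𝓜(ℂ, A)) ⁻¹'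
          (@closure _ τ ((DoubleCentralizer.coe ℂ : A → 𝓜(ℂ, A)) '' (I : Set A)))
        = (I : Set A)) ∧
    (∀ J : Submodule ℂ 𝓜(ℂ, A), @IsClosed _ τ (J : Set 𝓜(ℂ, A)) →
      (∀ m : 𝓜(ℂ, A), ∀ x ∈ J, m * x ∈ J) →
      @closure _ τ ((DoubleCentralizer.coe ℂ : A → 𝓜(ℂ, A)) ''
          ((DoubleCentralizer.coe ℂ : A → 𝓜(ℂ, A)) ⁻¹' (J : Set 𝓜(ℂ, A))))
        = (J : Set 𝓜(ℂ, A))) := by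
  obtain ⟨ι, l, e, C, hl, hC, hleft, hright⟩ := bai
  haveI := hl
  -- the weak-star embedding
  set emb : 𝓜(ℂ, A) → WeakDual ℂ X := fun m => StrongDual.toWeakDual (Φ m) with hembdef
  have hInd : @IsInducing _ _ τ _ emb := ⟨hτ⟩
  -- the key lemma: if `μ` is in the weak*-closure of a closed left ideal `I`, then `Aμ ⊆ I`
  have key : ∀ I : Submodule ℂ A, IsClosed (I : Set A) → (∀ a : A, ∀ x ∈ I, a * x ∈ I) →
      ∀ μ ∈ @closure _ τ ((DoubleCentralizer.coe ℂ : A → 𝓜(ℂ, A)) '' (I : Set A)),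
      ∀ b : A, μ.snd b ∈ I := by
    intro I hIc hIl μ hμ b
    by_contra hnb
    obtain ⟨g, hg0, hgx⟩ := aux_exists_dual_annihilator I hIc hnb
    have hcont := (hcompl b g).1
    have hsub : (DoubleCentralizer.coe ℂ : A → 𝓜(ℂ, A)) '' (I : Set A) ⊆
        {ν : 𝓜(ℂ, A) | g (ν.snd b) = 0} := by
      rintro _ ⟨c, hc, rfl⟩
      show g ((DoubleCentralizer.coe ℂ c).snd b) = 0
      show g (b * c) = 0
      exact hg0 _ (hIl b c hc)
    have hcl : @IsClosed _ τ {ν : 𝓜(ℂ, A) | g (ν.snd b) = 0} :=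
      isClosed_eq hcont (@continuous_const _ _ τ _ _)
    exact hgx (closure_minimal hsub hcl hμ)
  -- membership of `m ∈ J` in the closure of `A ∩ J`
  have hmem_closure : ∀ J : Submodule ℂ 𝓜(ℂ, A),
      (∀ m : 𝓜(ℂ, A), ∀ x ∈ J, m * x ∈ J) → ∀ m ∈ J,
      m ∈ @closure _ τ ((DoubleCentralizer.coe ℂ : A → 𝓜(ℂ, A)) ''
        ((DoubleCentralizer.coe ℂ : A → 𝓜(ℂ, A)) ⁻¹' (J : Set 𝓜(ℂ, A)))) := by
    intro J hJl m hm
    set F : ι → 𝓜(ℂ, A) := fun i => DoubleCentralizer.coe ℂ (e i) * m with hF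
    have hFJ : ∀ i, F i ∈ (DoubleCentralizer.coe ℂ : A → 𝓜(ℂ, A)) ''
        ((DoubleCentralizer.coe ℂ : A → 𝓜(ℂ, A)) ⁻¹' (J : Set 𝓜(ℂ, A))) := by
      intro i
      refine ⟨m.snd (e i), ?_, (aux_coe_mul hfaith (e i) m).symm⟩
      show DoubleCentralizer.coe ℂ (m.snd (e i)) ∈ (J : Set 𝓜(ℂ, A))
      rw [← aux_coe_mul hfaith (e i) m]
      exact hJl _ m hm
    -- norm bounds
    have hC0 : 0 ≤ C := by
      obtain ⟨i⟩ := hl.nonempty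
      exact le_trans (norm_nonneg _) (hC i)
    obtain ⟨K, hK0, hKb⟩ := aux_bound Φ
    set R : ℝ := K * (C * ‖m‖) with hR
    have hFb : ∀ i, ‖Φ (F i)‖ ≤ R := by
      intro i
      have h0 : ‖Φ (F i)‖ ≤ K * ‖F i‖ := hKb (F i)
      have h2 : ‖(DoubleCentralizer.coe ℂ (e i) : 𝓜(ℂ, A))‖ ≤ C := by
        rw [DoubleCentralizer.norm_def, Prod.norm_def]
        refine max_le (le_trans (ContinuousLinearMap.opNorm_mul_apply_le ℂ A (e i)) (hC i)) ?_
        refine le_trans (ContinuousLinearMap.opNorm_le_bound _ (norm_nonneg (e i))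
          fun b => ?_) (hC i)
        rw [mul_comm]
        exact norm_mul_le b (e i)
      have h1 : ‖F i‖ ≤ C * ‖m‖ :=
        le_trans (norm_mul_le _ _) (mul_le_mul_of_nonneg_right h2 (norm_nonneg m))
      calc ‖Φ (F i)‖ ≤ K * ‖F i‖ := h0
        _ ≤ R := by rw [hR]; exact mul_le_mul_of_nonneg_left h1 hK0
    -- Banach–Alaoglu
    have hK : IsCompact (WeakDual.toStrongDual ⁻¹' Metric.closedBall 0 R : Set (WeakDual ℂ X)) :=
      WeakDual.isCompact_closedBall (𝕜 := ℂ) (E := X) 0 R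
    have hmemK : ∀ i, emb (F i) ∈
        (WeakDual.toStrongDual ⁻¹' Metric.closedBall 0 R : Set (WeakDual ℂ X)) := by
      intro i
      show WeakDual.toStrongDual (emb (F i)) ∈ Metric.closedBall 0 R
      rw [Metric.mem_closedBall, dist_zero_right]
      exact hFb i
    haveI : (Filter.map (fun i => emb (F i)) l).NeBot := Filter.map_neBot
    have hle : Filter.map (fun i => emb (F i)) l ≤ Filter.principal
        (WeakDual.toStrongDual ⁻¹' Metric.closedBall 0 R : Set (WeakDual ℂ X)) := by
      rw [Filter.le_principal_iff, Filter.mem_map]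
      exact Filter.univ_mem' hmemK
    obtain ⟨φ, hφK, hφ⟩ := hK.exists_clusterPt hle
    obtain ⟨μ, hembμ0⟩ := aux_symm Φ φ
    have hembμ : emb μ = φ := hembμ0
    have hclμ : @ClusterPt _ τ μ (Filter.map F l) := by
      rw [← hInd.mapClusterPt_iff]
      show ClusterPt (emb μ) (Filter.map emb (Filter.map F l))
      rw [Filter.map_map, hembμ]
      exact hφ
    -- identify the cluster point with `m`
    have hμm : μ = m := by
      refine DoubleCentralizer.ext ℂ A _ _ (Prod.ext ?_ ?_)
      · refine ContinuousLinearMap.ext fun a => ?_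
        rw [NormedSpace.eq_iff_forall_dual_eq (𝕜 := ℂ)]
        intro g
        have hcont := (hcompl a g).2
        have hd : Filter.Tendsto (fun i => g ((F i).fst a)) l (nhds (g (m.fst a))) := by
          have h1 : ∀ i, (F i).fst a = e i * m.fst a := fun i => rfl
          simp only [h1]
          exact (g.continuous.tendsto _).comp (hleft (m.fst a))
        exact aux_clusterPt_lim hclμ hcont hd
      · refine ContinuousLinearMap.ext fun a => ?_
        rw [NormedSpace.eq_iff_forall_dual_eq (𝕜 := ℂ)]
        intro g
        have hcont := (hcompl a g).1
        have hd : Filter.Tendsto (fun i => g ((F i).snd a)) l (nhds (g (m.snd a))) := by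
          have h1 : ∀ i, (F i).snd a = m.snd (a * e i) := fun i => rfl
          simp only [h1]
          exact (g.continuous.tendsto _).comp ((m.snd.continuous.tendsto _).comp (hright a))
        exact aux_clusterPt_lim hclμ hcont hd
    rw [← hμm]
    exact mem_closure_iff_clusterPt.mpr
      (hclμ.mono (Filter.le_principal_iff.2 (Filter.mem_map.2 (Filter.univ_mem' hFJ))))
  constructor
  · intro I hIc hIl
    apply Set.Subset.antisymm
    · intro a ha
      have h1 : ∀ b : A, b * a ∈ I := by
        intro b
        have h2 := key I hIc hIl _ ha b
        exact h2
      exact hIc.mem_of_tendsto (hleft a) (Filter.Eventually.of_forall fun i => h1 (e i))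
    · intro a ha
      exact subset_closure ⟨a, ha, rfl⟩
  · intro J hJc hJl
    apply Set.Subset.antisymm
    · exact closure_minimal (Set.image_preimage_subset _ _) hJc
    · intro m hm
      exact hmem_closure J hJl m hm
end
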